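/- arXiv:1311.7678 — 3 statements merged into one kernel-verified Lean document; each statement's English description precedes it below -/
import Mathlib

section
/- Let 1 ≤ k ≤ n−1 and 1 ≤ p with p ≥ (k+1)/k. Define f₀(x',x'') = (2+|x'|)^{−(k+1)/p} e^{−|x''|²} / (log(2+|x'|))^{1/p+δ} for x' ∈ ℝ^{k+1}, x'' ∈ ℝ^{n−k−1}, where 0 < δ < 1/p' and 1/p + 1/p' = 1. Then f₀ ∈ L^p(ℝⁿ), but for every hyperplane {x' : θ·x' = s} in ℝ^{k+1} and every x'', the integral of f₀(·, x'') over that hyperplane is infinite. -/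
open MeasureTheory Set Metric
open scoped ENNReal NNReal RealInnerProductSpace

lemma vol_le_hausdorff (k : ℕ) :
    (volume : Measure (EuclideanSpace ℝ (Fin k))) ≤ μH[(k : ℝ)] := by
  rw [Measure.le_iff]
  intro s hs
  have h1 : volume s = (volume : Measure (Fin k → ℝ)) ((WithLp.equiv 2 (Fin k → ℝ)) '' s) := by
    have hmp : MeasurePreserving (MeasurableEquiv.toLp 2 (Fin k → ℝ)) volume volume :=
      (EuclideanSpace.volume_preserving_symm_measurableEquiv_toLp (Fin k)).symm _
    have h := hmp.measure_preimage hs.nullMeasurableSet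
    have himg : (MeasurableEquiv.toLp 2 (Fin k → ℝ)) ⁻¹' s
        = (WithLp.equiv 2 (Fin k → ℝ)) '' s := by
      rw [Equiv.image_eq_preimage_symm]
      rfl
    rw [himg] at h
    exact h.symm
  have h2 : (volume : Measure (Fin k → ℝ)) ((WithLp.equiv 2 (Fin k → ℝ)) '' s) = μH[(k : ℝ)] ((WithLp.equiv 2 (Fin k → ℝ)) '' s) := by
    have := hausdorffMeasure_pi_real (ι := Fin k)
    simp only [Fintype.card_fin] at this
    rw [← this]
  have h3 : μH[(k : ℝ)] ((WithLp.equiv 2 (Fin k → ℝ)) '' s) ≤ μH[(k : ℝ)] s := by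
    have hl : LipschitzWith 1 (WithLp.equiv 2 (Fin k → ℝ)) := PiLp.lipschitzWith_ofLp 2 _
    calc μH[(k : ℝ)] ((WithLp.equiv 2 (Fin k → ℝ)) '' s) ≤ (1 : ℝ≥0) ^ (k : ℝ) * μH[(k : ℝ)] s :=
          hl.hausdorffMeasure_image_le (by positivity) s
      _ = μH[(k : ℝ)] s := by simp
  rw [h1, h2]; exact h3

lemma harmonic_ennreal : ∑' j : ℕ, ENNReal.ofReal (1 / ((j : ℝ) + 1)) = ⊤ := by
  by_contra h
  have h' : ∑' j : ℕ, ((1 / ((j : ℝ) + 1)).toNNReal : ℝ≥0∞) ≠ ⊤ := by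
    simpa [ENNReal.ofReal] using h
  rw [ENNReal.tsum_coe_ne_top_iff_summable] at h'
  have hs : Summable (fun j : ℕ => 1 / ((j : ℝ) + 1)) := by
    have := NNReal.summable_coe.2 h'
    refine this.congr fun j => ?_
    rw [Real.coe_toNNReal]
    positivity
  have : Summable (fun j : ℕ => 1 / (j : ℝ)) := by
    rw [← summable_nat_add_iff 1]
    refine hs.congr fun j => by push_cast; ring_nf
  exact Real.not_summable_one_div_natCast this


variable {E : Type*} [NormedAddCommGroup E]

/-- dyadic annulus -/
def ann (E : Type*) [NormedAddCommGroup E] (j : ℕ) : Set E :=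
  closedBall 0 ((2:ℝ)^(j+1)) \ closedBall 0 ((2:ℝ)^j)

lemma mem_ann_iff {j : ℕ} {x : E} : x ∈ ann E j ↔ (2:ℝ)^j < ‖x‖ ∧ ‖x‖ ≤ (2:ℝ)^(j+1) := by
  simp [ann, mem_closedBall, dist_zero_right, not_le, and_comm]

lemma ann_measurable [MeasurableSpace E] [OpensMeasurableSpace E] (j : ℕ) :
    MeasurableSet (ann E j) :=
  measurableSet_closedBall.diff measurableSet_closedBall

lemma ann_disjoint : Pairwise (Function.onFun Disjoint (ann E)) := by
  intro i j hij
  wlog h : i < j generalizing i j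
  · exact (this hij.symm (by omega)).symm
  rw [Function.onFun, Set.disjoint_left]
  intro x hxi hxj
  rw [mem_ann_iff] at hxi hxj
  have : (2:ℝ)^(i+1) ≤ (2:ℝ)^j := by
    apply pow_le_pow_right₀ (by norm_num) (by omega)
  linarith [hxi.2, hxj.1]

lemma exists_ann {x : E} (hx : 1 < ‖x‖) : ∃ j, x ∈ ann E j := by
  have hex : ∃ m : ℕ, ‖x‖ ≤ (2:ℝ)^(m+1) := by
    obtain ⟨m, hm⟩ := pow_unbounded_of_one_lt ‖x‖ (by norm_num : (1:ℝ) < 2)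
    exact ⟨m, le_of_lt (lt_of_lt_of_le hm (by apply pow_le_pow_right₀ (by norm_num) (by omega)))⟩
  classical
  let j := Nat.find hex
  refine ⟨j, mem_ann_iff.2 ⟨?_, Nat.find_spec hex⟩⟩
  rcases Nat.eq_zero_or_pos j with hj | hj
  · rw [hj]; simpa using hx
  · have := Nat.find_min hex (m := j - 1) (by omega)
    push_neg at this
    calc (2:ℝ)^j = (2:ℝ)^((j-1)+1) := by congr 1; omega
      _ < ‖x‖ := this

lemma lintegral_eq_top_of_annuli [MeasurableSpace E] [OpensMeasurableSpace E]
    (μ : Measure E) (g : E → ℝ≥0∞) (c : ℕ → ℝ≥0∞)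
    (hg : ∀ j, ∀ y ∈ ann E j, c j ≤ g y)
    (htop : ∑' j, c j * μ (ann E j) = ⊤) : ∫⁻ y, g y ∂μ = ⊤ := by
  rw [eq_top_iff, ← htop]
  calc ∑' j, c j * μ (ann E j) ≤ ∑' j, ∫⁻ y in ann E j, g y ∂μ := by
        refine ENNReal.tsum_le_tsum fun j => ?_
        rw [← setLIntegral_const (ann E j) (c j)]
        exact setLIntegral_mono' (ann_measurable j) (fun x hx => hg j x hx)
    _ = ∫⁻ y in ⋃ j, ann E j, g y ∂μ :=
        (lintegral_iUnion (fun j => ann_measurable j) ann_disjoint g).symm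
    _ ≤ ∫⁻ y, g y ∂μ := by
        rw [← setLIntegral_univ (μ := μ) (f := g)]
        exact lintegral_mono_set (subset_univ _)

lemma lintegral_le_annuli [MeasurableSpace E] [OpensMeasurableSpace E]
    (μ : Measure E) (g : E → ℝ≥0∞) (M : ℝ≥0∞) (c : ℕ → ℝ≥0∞)
    (hgM : ∀ y ∈ closedBall (0:E) 1, g y ≤ M)
    (hg : ∀ j, ∀ y ∈ ann E j, g y ≤ c j) :
    ∫⁻ y, g y ∂μ ≤ M * μ (closedBall 0 1) + ∑' j, c j * μ (ann E j) := by
  have hcov : (univ : Set E) ⊆ closedBall 0 1 ∪ ⋃ j, ann E j := by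
    intro x _
    rcases le_or_gt ‖x‖ 1 with h | h
    · exact Or.inl (by simpa [mem_closedBall, dist_zero_right] using h)
    · exact Or.inr (mem_iUnion.2 (exists_ann h))
  calc ∫⁻ y, g y ∂μ = ∫⁻ y in univ, g y ∂μ := by rw [setLIntegral_univ]
    _ ≤ ∫⁻ y in closedBall 0 1 ∪ ⋃ j, ann E j, g y ∂μ := lintegral_mono_set hcov
    _ ≤ (∫⁻ y in closedBall 0 1, g y ∂μ) + ∫⁻ y in ⋃ j, ann E j, g y ∂μ :=
        lintegral_union_le _ _ _
    _ ≤ M * μ (closedBall 0 1) + ∑' j, c j * μ (ann E j) := by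
        refine add_le_add ?_ ?_
        · rw [← setLIntegral_const (closedBall (0:E) 1) M]
          exact setLIntegral_mono' measurableSet_closedBall hgM
        · refine le_trans (lintegral_iUnion_le _ _) (ENNReal.tsum_le_tsum fun j => ?_)
          rw [← setLIntegral_const (ann E j) (c j)]
          exact setLIntegral_mono' (ann_measurable j) (fun x hx => hg j x hx)


lemma hyperplane_param (k : ℕ) (θ : EuclideanSpace ℝ (Fin (k+1))) (hθ : ‖θ‖ = 1) (s : ℝ) :
    ∃ φ : EuclideanSpace ℝ (Fin k) → EuclideanSpace ℝ (Fin (k+1)),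
      Isometry φ ∧ Set.range φ = {x | (inner ℝ x θ : ℝ) = s} ∧ ∀ y, ‖φ y‖ ≤ |s| + ‖y‖ := by
  have hθ0 : θ ≠ 0 := by intro h; rw [h, norm_zero] at hθ; norm_num at hθ
  have hspan : Module.finrank ℝ (ℝ ∙ θ) = 1 := finrank_span_singleton hθ0
  have hW : Module.finrank ℝ ((ℝ ∙ θ)ᗮ : Submodule ℝ (EuclideanSpace ℝ (Fin (k+1)))) = k := by
    have h1 := Submodule.finrank_add_finrank_orthogonal (K := (ℝ ∙ θ :
      Submodule ℝ (EuclideanSpace ℝ (Fin (k+1)))))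
    have h3 : Module.finrank ℝ (EuclideanSpace ℝ (Fin (k+1))) = k + 1 :=
      finrank_euclideanSpace_fin
    omega
  set b : OrthonormalBasis (Fin k) ℝ ((ℝ ∙ θ)ᗮ : Submodule ℝ (EuclideanSpace ℝ (Fin (k+1)))) :=
    (stdOrthonormalBasis ℝ _).reindex (finCongr hW)
  set ψ := b.repr.symm
  set φ : EuclideanSpace ℝ (Fin k) → EuclideanSpace ℝ (Fin (k+1)) :=
    fun y => s • θ + (ψ y : EuclideanSpace ℝ (Fin (k+1))) with hφdef
  have hθθ : (inner ℝ θ θ : ℝ) = 1 := by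
    rw [real_inner_self_eq_norm_mul_norm, hθ]; norm_num
  refine ⟨φ, ?_, ?_, ?_⟩
  · refine Isometry.of_dist_eq fun y z => ?_
    rw [dist_eq_norm, dist_eq_norm, hφdef]
    simp only [add_sub_add_left_eq_sub]
    rw [← Submodule.coe_sub, ← map_sub]
    rw [Submodule.norm_coe, ψ.norm_map]
  · ext x
    constructor
    · rintro ⟨y, rfl⟩
      have hmem : (ψ y : EuclideanSpace ℝ (Fin (k+1))) ∈ (ℝ ∙ θ)ᗮ := (ψ y).2
      rw [Submodule.mem_orthogonal_singleton_iff_inner_left] at hmem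
      show (inner ℝ (s • θ + (ψ y : EuclideanSpace ℝ (Fin (k+1)))) θ : ℝ) = s
      rw [inner_add_left, real_inner_smul_left, hθθ, hmem]
      ring
    · intro hx
      simp only [Set.mem_setOf_eq] at hx
      have hw : x - s • θ ∈ (ℝ ∙ θ)ᗮ := by
        rw [Submodule.mem_orthogonal_singleton_iff_inner_left]
        rw [inner_sub_left, real_inner_smul_left, hθθ, hx]
        ring
      refine ⟨ψ.symm ⟨x - s • θ, hw⟩, ?_⟩
      simp only [hφdef, LinearIsometryEquiv.apply_symm_apply]
      abel
  · intro y
    calc ‖φ y‖ ≤ ‖s • θ‖ + ‖(ψ y : EuclideanSpace ℝ (Fin (k+1)))‖ := norm_add_le _ _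
      _ = |s| + ‖y‖ := by
          rw [norm_smul, hθ, Submodule.norm_coe, ψ.norm_map]
          simp [Real.norm_eq_abs]


lemma log_six_ge_one : (1:ℝ) ≤ Real.log 3 + Real.log 2 := by
  have h := Real.exp_one_lt_d9
  have h6 : Real.log 3 + Real.log 2 = Real.log 6 := by
    rw [← Real.log_mul (by norm_num) (by norm_num)]; norm_num
  rw [h6]
  calc (1:ℝ) = Real.log (Real.exp 1) := (Real.log_exp 1).symm
    _ ≤ Real.log 6 := Real.log_le_log (Real.exp_pos 1) (by linarith)

/-- Lower bound on annuli for part 2. -/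
lemma R1 (k : ℕ) (c a : ℝ) (hc : c ≤ (k:ℝ)) (hc0 : 0 ≤ c) (ha0 : 0 ≤ a) (ha : a ≤ 1)
    (s R : ℝ) (j : ℕ) (hR : 0 ≤ R) (hR2 : R ≤ |s| + 2^(j+1)) :
    ((3+|s|)*2^(j+1)) ^ (-(k:ℝ)) / ((Real.log (3+|s|) + Real.log 2) * ((j:ℝ)+1))
      ≤ (2+R) ^ (-c) / (Real.log (2+R)) ^ a := by
  have habs : (0:ℝ) ≤ |s| := abs_nonneg s
  have h2j : (2:ℝ) ≤ 2^(j+1) := by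
    calc (2:ℝ) = 2^1 := (pow_one 2).symm
      _ ≤ 2^(j+1) := by apply pow_le_pow_right₀ (by norm_num) (by omega)
  set T : ℝ := (3+|s|)*2^(j+1) with hT
  have hT1 : (1:ℝ) ≤ T := by nlinarith
  have hT2 : 2 + R ≤ T := by nlinarith
  have hRpos : (0:ℝ) < 2 + R := by linarith
  set L : ℝ := Real.log (3+|s|) + Real.log 2 with hL
  have hlog3 : (0:ℝ) ≤ Real.log (3+|s|) := Real.log_nonneg (by linarith)
  have hL1 : (1:ℝ) ≤ L := by
    have := log_six_ge_one
    have : Real.log 3 ≤ Real.log (3+|s|) := Real.log_le_log (by norm_num) (by linarith)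
    have h2 : (0:ℝ) < Real.log 2 := Real.log_pos (by norm_num)
    have h3 := log_six_ge_one
    linarith
  have hLj1 : (1:ℝ) ≤ L * ((j:ℝ)+1) := by
    have : (1:ℝ) ≤ (j:ℝ)+1 := by
      have := Nat.cast_nonneg (α := ℝ) j
      linarith
    nlinarith
  -- numerator
  have hnum : T ^ (-(k:ℝ)) ≤ (2+R) ^ (-c) := by
    calc T ^ (-(k:ℝ)) ≤ T ^ (-c) :=
          Real.rpow_le_rpow_of_exponent_le hT1 (by linarith)
      _ ≤ (2+R) ^ (-c) :=
          Real.rpow_le_rpow_of_nonpos hRpos hT2 (by linarith)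
  -- denominator
  have hlogR : (0:ℝ) < Real.log (2+R) := Real.log_pos (by linarith)
  have hden : (Real.log (2+R)) ^ a ≤ L * ((j:ℝ)+1) := by
    have h1 : Real.log (2+R) ≤ L * ((j:ℝ)+1) := by
      have hlt : Real.log (2+R) ≤ Real.log T := Real.log_le_log hRpos hT2
      have hTlog : Real.log T = Real.log (3+|s|) + ((j:ℝ)+1) * Real.log 2 := by
        rw [hT, Real.log_mul (by linarith) (by positivity), Real.log_pow]
        push_cast; ring
      have h2 : (0:ℝ) < Real.log 2 := Real.log_pos (by norm_num)
      have hj0 : (0:ℝ) ≤ (j:ℝ) := Nat.cast_nonneg j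
      calc Real.log (2+R) ≤ Real.log (3+|s|) + ((j:ℝ)+1) * Real.log 2 := by
            rw [← hTlog]; exact hlt
        _ ≤ L * ((j:ℝ)+1) := by rw [hL]; nlinarith
    calc (Real.log (2+R)) ^ a ≤ (L * ((j:ℝ)+1)) ^ a :=
          Real.rpow_le_rpow hlogR.le h1 ha0
      _ ≤ (L * ((j:ℝ)+1)) ^ (1:ℝ) :=
          Real.rpow_le_rpow_of_exponent_le hLj1 ha
      _ = L * ((j:ℝ)+1) := Real.rpow_one _
  exact div_le_div₀ (Real.rpow_nonneg hRpos.le _) hnum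
    (Real.rpow_pos_of_pos hlogR _) hden

/-- Upper bound on annuli for part 1. -/
lemma R2 (K aa : ℝ) (hK : 0 ≤ K) (haa : 0 ≤ aa) (j : ℕ) (R : ℝ) (hR : (2:ℝ)^j ≤ R) :
    (2+R) ^ (-K) / (Real.log (2+R)) ^ aa
      ≤ ((2:ℝ)^j) ^ (-K) / ((((j:ℝ)+1) * Real.log 2 / 2)) ^ aa := by
  have h2j : (0:ℝ) < (2:ℝ)^j := by positivity
  have hR0 : (0:ℝ) < 2 + R := by linarith
  have hnum : (2+R) ^ (-K) ≤ ((2:ℝ)^j) ^ (-K) :=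
    Real.rpow_le_rpow_of_nonpos h2j (by linarith) (by linarith)
  have h2 : (0:ℝ) < Real.log 2 := Real.log_pos (by norm_num)
  have hden0 : (0:ℝ) < ((j:ℝ)+1) * Real.log 2 / 2 := by positivity
  have hlog : ((j:ℝ)+1) * Real.log 2 / 2 ≤ Real.log (2+R) := by
    have hsq : (2:ℝ)^(j+1) ≤ (2+R)^2 := by
      have : (2:ℝ)^(j+1) = 2 * 2^j := by rw [pow_succ]; ring
      nlinarith
    have := Real.log_le_log (by positivity) hsq
    rw [Real.log_pow, Real.log_pow] at this
    push_cast at this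
    linarith
  have hden : (((j:ℝ)+1) * Real.log 2 / 2) ^ aa ≤ (Real.log (2+R)) ^ aa :=
    Real.rpow_le_rpow hden0.le hlog haa
  exact div_le_div₀ (Real.rpow_nonneg h2j.le _) hnum
    (Real.rpow_pos_of_pos hden0 _) hden

/-- Global upper bound for part 1. -/
lemma R3 (K aa : ℝ) (hK : 0 ≤ K) (haa : 0 ≤ aa) (R : ℝ) (hR : 0 ≤ R) :
    (2+R) ^ (-K) / (Real.log (2+R)) ^ aa ≤ (2:ℝ) ^ (-K) / (Real.log 2) ^ aa := by
  have h2 : (0:ℝ) < Real.log 2 := Real.log_pos (by norm_num)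
  have hnum : (2+R) ^ (-K) ≤ (2:ℝ) ^ (-K) :=
    Real.rpow_le_rpow_of_nonpos (by norm_num) (by linarith) (by linarith)
  have hden : (Real.log 2) ^ aa ≤ (Real.log (2+R)) ^ aa :=
    Real.rpow_le_rpow h2.le (Real.log_le_log (by norm_num) (by linarith)) haa
  exact div_le_div₀ (Real.rpow_nonneg (by norm_num) _) hnum
    (Real.rpow_pos_of_pos h2 _) hden

lemma vol_ann_le (m : ℕ) (j : ℕ) :
    volume (ann (EuclideanSpace ℝ (Fin m)) j)
      ≤ ENNReal.ofReal (((2:ℝ)^(j+1))^m) * volume (ball (0:EuclideanSpace ℝ (Fin m)) 1) := by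
  refine le_trans (measure_mono diff_subset) ?_
  rw [Measure.addHaar_closedBall _ _ (by positivity), finrank_euclideanSpace_fin]

lemma vol_ann_ge (m : ℕ) (hm : 1 ≤ m) (j : ℕ) :
    ENNReal.ofReal (((2:ℝ)^j)^m) * volume (ball (0:EuclideanSpace ℝ (Fin m)) 1)
      ≤ volume (ann (EuclideanSpace ℝ (Fin m)) j) := by
  have hsub : closedBall (0:EuclideanSpace ℝ (Fin m)) ((2:ℝ)^j)
      ⊆ closedBall (0:EuclideanSpace ℝ (Fin m)) ((2:ℝ)^(j+1)) :=
    closedBall_subset_closedBall (by apply pow_le_pow_right₀ (by norm_num) (by omega))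
  have h1 : volume (ann (EuclideanSpace ℝ (Fin m)) j)
      = volume (closedBall (0:EuclideanSpace ℝ (Fin m)) ((2:ℝ)^(j+1)))
        - volume (closedBall (0:EuclideanSpace ℝ (Fin m)) ((2:ℝ)^j)) :=
    measure_diff hsub measurableSet_closedBall.nullMeasurableSet
      measure_closedBall_lt_top.ne
  rw [h1, Measure.addHaar_closedBall _ _ (by positivity),
    Measure.addHaar_closedBall _ _ (by positivity), finrank_euclideanSpace_fin]
  refine ENNReal.le_sub_of_add_le_right
    (ENNReal.mul_ne_top ENNReal.ofReal_ne_top measure_ball_lt_top.ne) ?_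
  rw [← add_mul, ← ENNReal.ofReal_add (by positivity) (by positivity)]
  refine mul_le_mul_left (ENNReal.ofReal_le_ofReal ?_) _
  have h2m : (2:ℝ) ≤ 2^m := by
    calc (2:ℝ) = 2^1 := (pow_one 2).symm
      _ ≤ 2^m := by apply pow_le_pow_right₀ (by norm_num) (by omega)
  have hexp : ((2:ℝ)^(j+1))^m = ((2:ℝ)^j)^m * 2^m := by
    rw [pow_succ, mul_pow]
  have hpos : (0:ℝ) < ((2:ℝ)^j)^m := by positivity
  nlinarith

lemma tsum_ofReal_div_succ_top (c : ℝ) (hc : 0 < c) :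
    ∑' j : ℕ, ENNReal.ofReal (c / ((j:ℝ)+1)) = ⊤ := by
  have h : ∀ j : ℕ, ENNReal.ofReal (c / ((j:ℝ)+1))
      = ENNReal.ofReal c * ENNReal.ofReal (1 / ((j:ℝ)+1)) := by
    intro j
    rw [← ENNReal.ofReal_mul hc.le]
    congr 1; ring
  simp_rw [h]
  rw [ENNReal.tsum_mul_left, harmonic_ennreal, ENNReal.mul_top]
  simp [hc, ENNReal.ofReal_eq_zero, not_le]

lemma tsum_ofReal_rpow_succ_lt_top (aa : ℝ) (haa : 1 < aa) :
    ∑' j : ℕ, ENNReal.ofReal (((j:ℝ)+1) ^ (-aa)) < ⊤ := by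
  have hs : Summable (fun j : ℕ => ((j:ℝ)+1) ^ (-aa)) := by
    have h0 : Summable (fun j : ℕ => ((j:ℝ)) ^ (-aa)) :=
      Real.summable_nat_rpow.2 (by linarith)
    have := (summable_nat_add_iff 1).2 h0
    refine this.congr fun j => by push_cast; norm_num
  rw [← ENNReal.ofReal_tsum_of_nonneg (fun j => Real.rpow_nonneg (by positivity) _) hs]
  exact ENNReal.ofReal_lt_top
lemma part2_div (k : ℕ) (hk : 1 ≤ k) (s C : ℝ) (hC : 0 < C)
    (g : EuclideanSpace ℝ (Fin k) → ℝ≥0∞)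
    (hg : ∀ j : ℕ, ∀ y ∈ ann (EuclideanSpace ℝ (Fin k)) j,
      ENNReal.ofReal (C * (((3+|s|)*2^(j+1)) ^ (-(k:ℝ)))
        / ((Real.log (3+|s|) + Real.log 2) * ((j:ℝ)+1))) ≤ g y) :
    ∫⁻ y, g y ∂(volume) = ⊤ := by
  have habs : (0:ℝ) ≤ |s| := abs_nonneg s
  have hL1 : (1:ℝ) ≤ Real.log (3+|s|) + Real.log 2 := by
    have h1 : Real.log 3 ≤ Real.log (3+|s|) := Real.log_le_log (by norm_num) (by linarith)
    have := log_six_ge_one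
    linarith
  have hL0 : (0:ℝ) < Real.log (3+|s|) + Real.log 2 := by linarith
  set L : ℝ := Real.log (3+|s|) + Real.log 2 with hLdef
  set c₀ : ℝ := C * (1/(2*(3+|s|)))^k / L with hc₀
  have hc₀pos : 0 < c₀ := by
    apply div_pos (mul_pos hC (pow_pos (by positivity) k)) hL0
  refine lintegral_eq_top_of_annuli volume g
    (fun j => ENNReal.ofReal (C * (((3+|s|)*2^(j+1)) ^ (-(k:ℝ))) / (L * ((j:ℝ)+1)))) hg ?_
  rw [eq_top_iff]
  have key : ∀ j : ℕ,
      ENNReal.ofReal (c₀/((j:ℝ)+1)) * volume (ball (0:EuclideanSpace ℝ (Fin k)) 1)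
      ≤ ENNReal.ofReal (C * (((3+|s|)*2^(j+1)) ^ (-(k:ℝ))) / (L * ((j:ℝ)+1)))
        * volume (ann (EuclideanSpace ℝ (Fin k)) j) := by
    intro j
    have hident : C * (((3+|s|)*2^(j+1)) ^ (-(k:ℝ))) / (L * ((j:ℝ)+1)) * ((2:ℝ)^j)^k
        = c₀/((j:ℝ)+1) := by
      have hTpos : (0:ℝ) < (3+|s|)*2^(j+1) := by positivity
      have hrpow : ((3+|s|)*2^(j+1) : ℝ) ^ (-(k:ℝ))
          = (((3+|s|)*2^(j+1))^k)⁻¹ := by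
        rw [← Real.rpow_natCast ((3+|s|)*2^(j+1)) k, ← Real.rpow_neg hTpos.le]
      have hsplit : ((3+|s|)*(2:ℝ)^(j+1))^k = (2*(3+|s|))^k * ((2:ℝ)^j)^k := by
        rw [pow_succ, show (3+|s|)*((2:ℝ)^j*2) = (2*(3+|s|))*(2:ℝ)^j by ring, mul_pow]
      rw [hrpow, hsplit, hc₀]
      have h1 : ((2:ℝ)*(3+|s|))^k ≠ 0 := by positivity
      have h2 : ((2:ℝ)^j)^k ≠ 0 := by positivity
      have h3 : L ≠ 0 := by linarith
      have h4 : ((j:ℝ)+1) ≠ 0 := by positivity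
      field_simp
      ring
      rw [← mul_pow, inv_mul_cancel₀ (by positivity), one_pow]
    calc ENNReal.ofReal (c₀/((j:ℝ)+1)) * volume (ball (0:EuclideanSpace ℝ (Fin k)) 1)
        = ENNReal.ofReal (C * (((3+|s|)*2^(j+1)) ^ (-(k:ℝ))) / (L * ((j:ℝ)+1)))
          * (ENNReal.ofReal (((2:ℝ)^j)^k)
            * volume (ball (0:EuclideanSpace ℝ (Fin k)) 1)) := by
          rw [← mul_assoc, ← ENNReal.ofReal_mul (by positivity), hident]
      _ ≤ _ := by
          exact mul_le_mul_right (vol_ann_ge k hk j) _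
  calc (⊤:ℝ≥0∞) = (∑' j : ℕ, ENNReal.ofReal (c₀/((j:ℝ)+1)))
        * volume (ball (0:EuclideanSpace ℝ (Fin k)) 1) := by
        rw [tsum_ofReal_div_succ_top c₀ hc₀pos, ENNReal.top_mul]
        exact (measure_ball_pos volume _ one_pos).ne'
    _ = ∑' j : ℕ, ENNReal.ofReal (c₀/((j:ℝ)+1))
        * volume (ball (0:EuclideanSpace ℝ (Fin k)) 1) := ENNReal.tsum_mul_right.symm
    _ ≤ _ := ENNReal.tsum_le_tsum key

lemma part1_A_finite (k : ℕ) (aa : ℝ) (haa : 1 < aa) :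
    ∫⁻ y : EuclideanSpace ℝ (Fin (k+1)),
      ENNReal.ofReal ((2+‖y‖) ^ (-((k:ℝ)+1)) / (Real.log (2+‖y‖)) ^ aa) ∂volume < ⊤ := by
  have hlog2 : (0:ℝ) < Real.log 2 := Real.log_pos (by norm_num)
  set K : ℝ := (k:ℝ)+1 with hK
  have hK0 : 0 ≤ K := by positivity
  have haa0 : (0:ℝ) ≤ aa := by linarith
  set v := volume (ball (0:EuclideanSpace ℝ (Fin (k+1))) 1) with hv
  have hvtop : v < ⊤ := measure_ball_lt_top
  have hle := lintegral_le_annuli (E := EuclideanSpace ℝ (Fin (k+1))) volume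
    (fun y => ENNReal.ofReal ((2+‖y‖) ^ (-K) / (Real.log (2+‖y‖)) ^ aa))
    (ENNReal.ofReal ((2:ℝ) ^ (-K) / (Real.log 2) ^ aa))
    (fun j => ENNReal.ofReal (((2:ℝ)^j) ^ (-K) / (((j:ℝ)+1) * Real.log 2 / 2) ^ aa))
    (fun y _ => ENNReal.ofReal_le_ofReal (R3 K aa hK0 haa0 ‖y‖ (norm_nonneg y)))
    (fun j y hy => ENNReal.ofReal_le_ofReal
      (R2 K aa hK0 haa0 j ‖y‖ (mem_ann_iff.1 hy).1.le))
  refine lt_of_le_of_lt hle ?_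
  refine ENNReal.add_lt_top.2 ⟨?_, ?_⟩
  · exact ENNReal.mul_lt_top ENNReal.ofReal_lt_top measure_closedBall_lt_top
  set D : ℝ := 2^(k+1) * (Real.log 2 / 2) ^ (-aa) with hD
  have hDpos : 0 < D := by positivity
  have key : ∀ j : ℕ,
      ENNReal.ofReal (((2:ℝ)^j) ^ (-K) / (((j:ℝ)+1) * Real.log 2 / 2) ^ aa)
        * volume (ann (EuclideanSpace ℝ (Fin (k+1))) j)
      ≤ (ENNReal.ofReal D * v) * ENNReal.ofReal (((j:ℝ)+1) ^ (-aa)) := by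
    intro j
    have hident : ((2:ℝ)^j) ^ (-K) / (((j:ℝ)+1) * Real.log 2 / 2) ^ aa
        * ((2:ℝ)^(j+1))^(k+1) = D * (((j:ℝ)+1) ^ (-aa)) := by
      have h2j : (0:ℝ) < (2:ℝ)^j := by positivity
      have hj1 : (0:ℝ) < (j:ℝ)+1 := by positivity
      have hrpow1 : ((2:ℝ)^j) ^ (-K) = (((2:ℝ)^j)^(k+1))⁻¹ := by
        rw [hK, show ((k:ℝ)+1) = ((k+1:ℕ):ℝ) by push_cast; ring,
          ← Real.rpow_natCast ((2:ℝ)^j) (k+1), ← Real.rpow_neg h2j.le]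
      have hmul : (((j:ℝ)+1) * Real.log 2 / 2) ^ aa
          = ((j:ℝ)+1) ^ aa * (Real.log 2 / 2) ^ aa := by
        rw [show ((j:ℝ)+1) * Real.log 2 / 2 = ((j:ℝ)+1) * (Real.log 2 / 2) by ring,
          Real.mul_rpow hj1.le (by positivity)]
      have hsplit : ((2:ℝ)^(j+1))^(k+1) = ((2:ℝ)^j)^(k+1) * 2^(k+1) := by
        rw [← pow_mul, ← pow_mul, ← pow_add]
        congr 1
        ring
      have hneg1 : (((j:ℝ)+1)) ^ (-aa) = (((j:ℝ)+1) ^ aa)⁻¹ := by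
        rw [Real.rpow_neg hj1.le]
      have hneg2 : (Real.log 2 / 2 : ℝ) ^ (-aa) = ((Real.log 2 / 2) ^ aa)⁻¹ := by
        rw [Real.rpow_neg (by positivity)]
      rw [hrpow1, hmul, hsplit, hD, hneg1, hneg2]
      have h1 : ((2:ℝ)^j)^(k+1) ≠ 0 := by positivity
      have h2 : ((j:ℝ)+1) ^ aa ≠ 0 := by positivity
      have h3 : ((Real.log 2 / 2 : ℝ)) ^ aa ≠ 0 := by positivity
      field_simp
    calc ENNReal.ofReal (((2:ℝ)^j) ^ (-K) / (((j:ℝ)+1) * Real.log 2 / 2) ^ aa)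
          * volume (ann (EuclideanSpace ℝ (Fin (k+1))) j)
        ≤ ENNReal.ofReal (((2:ℝ)^j) ^ (-K) / (((j:ℝ)+1) * Real.log 2 / 2) ^ aa)
          * (ENNReal.ofReal (((2:ℝ)^(j+1))^(k+1)) * v) :=
          mul_le_mul_right (vol_ann_le (k+1) j) _
      _ = ENNReal.ofReal (((2:ℝ)^j) ^ (-K) / (((j:ℝ)+1) * Real.log 2 / 2) ^ aa
            * ((2:ℝ)^(j+1))^(k+1)) * v := by
          rw [← mul_assoc, ← ENNReal.ofReal_mul (by positivity)]
      _ = (ENNReal.ofReal D * v) * ENNReal.ofReal (((j:ℝ)+1) ^ (-aa)) := by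
          rw [hident, ENNReal.ofReal_mul hDpos.le]
          ring
  calc (∑' j : ℕ, ENNReal.ofReal (((2:ℝ)^j) ^ (-K) / (((j:ℝ)+1) * Real.log 2 / 2) ^ aa)
        * volume (ann (EuclideanSpace ℝ (Fin (k+1))) j))
      ≤ ∑' j : ℕ, (ENNReal.ofReal D * v) * ENNReal.ofReal (((j:ℝ)+1) ^ (-aa)) :=
        ENNReal.tsum_le_tsum key
    _ = (ENNReal.ofReal D * v) * ∑' j : ℕ, ENNReal.ofReal (((j:ℝ)+1) ^ (-aa)) :=
        ENNReal.tsum_mul_left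
    _ < ⊤ := ENNReal.mul_lt_top
        (ENNReal.mul_lt_top ENNReal.ofReal_lt_top hvtop)
        (tsum_ofReal_rpow_succ_lt_top aa haa)
/-- Sharpness of the bound `p < (k+1)/k`: for `p ≥ (k+1)/k` the explicit function
`f₀(x',x'') = (2+|x'|)^{-(k+1)/p} e^{-|x''|²} / (log(2+|x'|))^{1/p+δ}`, `0 < δ < 1/p'`,
belongs to `L^p(ℝⁿ)` but its integral over every hyperplane `{x' : θ·x' = s}` of
`ℝ^{k+1}` (for every fixed `x''`) is infinite. -/
theorem stmt2 (n k : ℕ) (hk : 1 ≤ k) (hkn : k ≤ n - 1) (p p' δ : ℝ)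
    (hp1 : 1 ≤ p) (hp2 : ((k : ℝ) + 1) / k ≤ p) (hpp' : 1 / p + 1 / p' = 1)
    (hδ1 : 0 < δ) (hδ2 : δ < 1 / p')
    (f₀ : EuclideanSpace ℝ (Fin (k + 1)) × EuclideanSpace ℝ (Fin (n - k - 1)) → ℝ)
    (hf₀ : ∀ x, f₀ x = (2 + ‖x.1‖) ^ (-((k : ℝ) + 1) / p) * Real.exp (-‖x.2‖ ^ 2) /
        (Real.log (2 + ‖x.1‖)) ^ (1 / p + δ)) :
    MemLp f₀ (ENNReal.ofReal p) volume ∧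
    ∀ θ : EuclideanSpace ℝ (Fin (k + 1)), ‖θ‖ = 1 → ∀ s : ℝ,
      ∀ x'' : EuclideanSpace ℝ (Fin (n - k - 1)),
        ∫⁻ x' in {x' : EuclideanSpace ℝ (Fin (k + 1)) | (inner ℝ x' θ : ℝ) = s},
          ENNReal.ofReal (f₀ (x', x'')) ∂(μH[(k : ℝ)]) = ⊤ := by
  have hk0 : (0:ℝ) < k := by exact_mod_cast hk
  have hp0 : (0:ℝ) < p := by linarith
  have hpne : p ≠ 0 := hp0.ne'
  have h1p' : 1 / p' = 1 - 1 / p := by linarith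
  have hinvp : 0 < 1 / p := by positivity
  have haux : 1 / p + δ < 1 := by rw [h1p'] at hδ2; linarith
  have ha0 : 0 < 1 / p + δ := by linarith
  have hckey : ((k:ℝ) + 1) / p ≤ k := by
    rw [div_le_iff₀ hp0]
    have := (div_le_iff₀ hk0).1 hp2
    linarith [mul_comm p (k:ℝ)]
  have hlogpos : ∀ y : EuclideanSpace ℝ (Fin (k+1)), 0 < Real.log (2 + ‖y‖) := by
    intro y
    apply Real.log_pos
    have := norm_nonneg y
    linarith
  have hf₀nonneg : ∀ x, 0 ≤ f₀ x := by
    intro x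
    rw [hf₀ x]
    have h1 : (0:ℝ) < 2 + ‖x.1‖ := by positivity
    have h2 := hlogpos x.1
    positivity
  constructor
  · -- Memℒp
    have hcont : Continuous f₀ := by
      have hfe : f₀ = fun x : EuclideanSpace ℝ (Fin (k + 1)) × EuclideanSpace ℝ (Fin (n - k - 1)) =>
          (2 + ‖x.1‖) ^ (-((k : ℝ) + 1) / p) * Real.exp (-‖x.2‖ ^ 2) /
          (Real.log (2 + ‖x.1‖)) ^ (1 / p + δ) := funext hf₀
      rw [hfe]
      have hbase : Continuous fun x : EuclideanSpace ℝ (Fin (k + 1)) ×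
          EuclideanSpace ℝ (Fin (n - k - 1)) => 2 + ‖x.1‖ :=
        continuous_const.add continuous_fst.norm
      have hbne : ∀ x : EuclideanSpace ℝ (Fin (k + 1)) ×
          EuclideanSpace ℝ (Fin (n - k - 1)), 2 + ‖x.1‖ ≠ 0 := by
        intro x; have := norm_nonneg x.1; positivity
      refine Continuous.div ?_ ?_ ?_
      · exact (hbase.rpow_const (fun x => Or.inl (hbne x))).mul
          (Real.continuous_exp.comp (continuous_snd.norm.pow 2).neg)
      · exact (hbase.log hbne).rpow_const (fun x => Or.inl (hlogpos x.1).ne')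
      · intro x
        exact (Real.rpow_pos_of_pos (hlogpos x.1) _).ne'
    refine ⟨hcont.aestronglyMeasurable, ?_⟩
    have hofp0 : ENNReal.ofReal p ≠ 0 := by
      simp only [ne_eq, ENNReal.ofReal_eq_zero, not_le]; linarith
    rw [eLpNorm_eq_lintegral_rpow_enorm_toReal hofp0 ENNReal.ofReal_ne_top,
      ENNReal.toReal_ofReal hp0.le]
    refine ENNReal.rpow_lt_top_of_nonneg (by positivity) ?_
    have heq : ∀ x : EuclideanSpace ℝ (Fin (k + 1)) × EuclideanSpace ℝ (Fin (n - k - 1)),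
        ‖f₀ x‖ₑ ^ p
          = ENNReal.ofReal ((2 + ‖x.1‖) ^ (-((k:ℝ)+1)) / (Real.log (2 + ‖x.1‖)) ^ (1 + δ * p))
            * ENNReal.ofReal (Real.exp (-(p * ‖x.2‖ ^ 2))) := by
      intro x
      have h1 : (0:ℝ) < 2 + ‖x.1‖ := by positivity
      have h2 := hlogpos x.1
      rw [Real.enorm_eq_ofReal (hf₀nonneg x),
        ENNReal.ofReal_rpow_of_nonneg (hf₀nonneg x) hp0.le, hf₀ x]
      rw [Real.div_rpow (by positivity) (by positivity),
        Real.mul_rpow (by positivity) (by positivity)]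
      have e1 : ((2 + ‖x.1‖) ^ (-((k : ℝ) + 1) / p)) ^ p = (2 + ‖x.1‖) ^ (-((k:ℝ)+1)) := by
        rw [← Real.rpow_mul h1.le]
        congr 1
        field_simp
      have e2 : (Real.exp (-‖x.2‖ ^ 2)) ^ p = Real.exp (-(p * ‖x.2‖ ^ 2)) := by
        rw [← Real.exp_log (x := (Real.exp (-‖x.2‖ ^ 2)) ^ p) (by positivity),
          Real.log_rpow (Real.exp_pos _), Real.log_exp]
        congr 1
        ring
      have e3 : ((Real.log (2 + ‖x.1‖)) ^ (1 / p + δ)) ^ p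
          = (Real.log (2 + ‖x.1‖)) ^ (1 + δ * p) := by
        rw [← Real.rpow_mul h2.le]
        congr 1
        field_simp
      rw [e1, e2, e3, ← ENNReal.ofReal_mul (by positivity)]
      congr 1
      ring
    rw [lintegral_congr heq]
    rw [Measure.volume_eq_prod]
    have hA : AEMeasurable (fun y : EuclideanSpace ℝ (Fin (k + 1)) =>
        ENNReal.ofReal ((2 + ‖y‖) ^ (-((k:ℝ)+1)) / (Real.log (2 + ‖y‖)) ^ (1 + δ * p)))
        (volume) := by
      refine (ENNReal.continuous_ofReal.comp ?_).aemeasurable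
      have hbase : Continuous fun y : EuclideanSpace ℝ (Fin (k + 1)) => 2 + ‖y‖ :=
        continuous_const.add continuous_norm
      have hbne : ∀ y : EuclideanSpace ℝ (Fin (k + 1)), 2 + ‖y‖ ≠ 0 := by
        intro y; have := norm_nonneg y; positivity
      exact (hbase.rpow_const (fun y => Or.inl (hbne y))).div
        ((hbase.log hbne).rpow_const (fun y => Or.inl (hlogpos y).ne'))
        (fun y => (Real.rpow_pos_of_pos (hlogpos y) _).ne')
    have hB : AEMeasurable (fun z : EuclideanSpace ℝ (Fin (n - k - 1)) =>
        ENNReal.ofReal (Real.exp (-(p * ‖z‖ ^ 2)))) (volume) :=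
      (ENNReal.continuous_ofReal.comp
        (Real.continuous_exp.comp ((continuous_const.mul (continuous_norm.pow 2)).neg))).aemeasurable
    refine (lintegral_prod_mul hA hB).trans_ne (ENNReal.mul_ne_top ?_ ?_)
    · exact (part1_A_finite k (1 + δ * p) (by nlinarith)).ne
    · -- Gaussian
      have hint : Integrable (fun z : EuclideanSpace ℝ (Fin (n - k - 1)) =>
          Real.exp (-(p * ‖z‖ ^ 2))) := by
        have h := GaussianFourier.integrable_cexp_neg_mul_sq_norm_add
          (V := EuclideanSpace ℝ (Fin (n - k - 1))) (b := (p:ℂ)) (by simpa using hp0) 0 0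
        refine h.norm.congr (Filter.Eventually.of_forall fun z => ?_)
        simp only [Complex.norm_exp]
        congr 1
        simp [Complex.add_re, Complex.mul_re, ← Complex.ofReal_pow]
      exact hint.lintegral_lt_top.ne
  · -- divergence on hyperplanes
    intro θ hθ s x''
    obtain ⟨φ, hiso, hrange, hbnd⟩ := hyperplane_param k θ hθ s
    have hrange' : {x' : EuclideanSpace ℝ (Fin (k+1)) | (inner ℝ x' θ : ℝ) = s}
        = Set.range φ := hrange.symm
    rw [hrange']
    have hmap := hiso.map_hausdorffMeasure (d := (k:ℝ)) (Or.inl (by positivity))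
    rw [← hmap]
    have hemb : MeasurableEmbedding φ := hiso.isClosedEmbedding.measurableEmbedding
    rw [hemb.lintegral_map]
    have hdiv := part2_div k hk s (Real.exp (-‖x''‖ ^ 2)) (Real.exp_pos _)
      (fun y => ENNReal.ofReal (f₀ (φ y, x''))) ?_
    · rw [eq_top_iff, ← hdiv]
      exact lintegral_mono' (vol_le_hausdorff k) le_rfl
    · intro j y hy
      refine ENNReal.ofReal_le_ofReal ?_
      rw [hf₀]
      obtain ⟨hy1, hy2⟩ := mem_ann_iff.1 hy
      have hRb : ‖φ y‖ ≤ |s| + 2 ^ (j+1) := le_trans (hbnd y) (by linarith)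
      have hR1 := R1 k (((k:ℝ)+1)/p) (1/p + δ) hckey (by positivity) ha0.le haux.le
        s ‖φ y‖ j (norm_nonneg _) hRb
      have hC := (Real.exp_pos (-‖x''‖ ^ 2)).le
      simp only
      have hrw : (2 + ‖(φ y, x'').1‖) ^ (-((k : ℝ) + 1) / p) * Real.exp (-‖(φ y, x'').2‖ ^ 2) /
          (Real.log (2 + ‖(φ y, x'').1‖)) ^ (1 / p + δ)
          = Real.exp (-‖x''‖ ^ 2) *
            ((2 + ‖φ y‖) ^ (-(((k : ℝ) + 1)/p)) / (Real.log (2 + ‖φ y‖)) ^ (1 / p + δ)) := by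
        rw [show (-((k : ℝ) + 1) / p) = -(((k : ℝ) + 1)/p) by ring]
        ring
      rw [hrw]
      calc Real.exp (-‖x''‖ ^ 2) * ((3 + |s|) * 2 ^ (j + 1)) ^ (-(k:ℝ)) /
            ((Real.log (3 + |s|) + Real.log 2) * ((j:ℝ) + 1))
          = Real.exp (-‖x''‖ ^ 2) * (((3 + |s|) * 2 ^ (j + 1)) ^ (-(k:ℝ)) /
            ((Real.log (3 + |s|) + Real.log 2) * ((j:ℝ) + 1))) := by ring
        _ ≤ _ := mul_le_mul_of_nonneg_left hR1 hC
end

section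
/- Let 0 ≤ k < n−1 and 1 ≤ p ≤ n−k. The function f̃(θ) = |θ'|^{−1}(1 − log|θ'|)^{−1} on Sⁿ, where θ' = (θ₁,…,θ_{n−k}), belongs to L^p(Sⁿ). -/
open MeasureTheory
open scoped ENNReal

namespace Stmt4Aux

noncomputable def chart (n : ℕ) (ε : ℝ) (j : Fin (n+1)) (y : Fin n → ℝ) :
    EuclideanSpace ℝ (Fin (n+1)) :=
  WithLp.toLp 2 (j.insertNth (ε * Real.sqrt (1 - ∑ i, y i ^ 2)) y)

noncomputable def chartK (n : ℕ) (δ : ℝ) : NNReal :=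
  Real.toNNReal (Real.sqrt (n+1) * (1 + n / Real.sqrt δ))

lemma sqrt_sub_le {d a b : ℝ} (hd : 0 < d) (ha : d ≤ a) (hb : d ≤ b) :
    |Real.sqrt a - Real.sqrt b| ≤ |a - b| / (2 * Real.sqrt d) := by
  have hsd : 0 < Real.sqrt d := Real.sqrt_pos.mpr hd
  have h1 : Real.sqrt d ≤ Real.sqrt a := Real.sqrt_le_sqrt ha
  have h2 : Real.sqrt d ≤ Real.sqrt b := Real.sqrt_le_sqrt hb
  rw [le_div_iff₀ (by positivity)]
  have key : |Real.sqrt a - Real.sqrt b| * (Real.sqrt a + Real.sqrt b) = |a - b| := by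
    rw [← abs_of_nonneg (show (0:ℝ) ≤ Real.sqrt a + Real.sqrt b by positivity), ← abs_mul]
    congr 1
    nlinarith [Real.sq_sqrt (hd.le.trans ha), Real.sq_sqrt (hd.le.trans hb)]
  calc |Real.sqrt a - Real.sqrt b| * (2 * Real.sqrt d)
      ≤ |Real.sqrt a - Real.sqrt b| * (Real.sqrt a + Real.sqrt b) := by
        have := abs_nonneg (Real.sqrt a - Real.sqrt b)
        nlinarith
    _ = |a - b| := key

lemma sum_sq_diff {n : ℕ} {y z : Fin n → ℝ} (hy : ∀ i, |y i| ≤ 1) (hz : ∀ i, |z i| ≤ 1) :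
    |(∑ i, y i ^ 2) - ∑ i, z i ^ 2| ≤ 2 * n * dist y z := by
  rw [← Finset.sum_sub_distrib]
  refine (Finset.abs_sum_le_sum_abs _ _).trans ?_
  have key : ∀ i, |y i ^ 2 - z i ^ 2| ≤ 2 * dist y z := by
    intro i
    have hi := dist_le_pi_dist y z i
    rw [Real.dist_eq] at hi
    have h1 := hy i; have h2 := hz i
    have habs : |y i ^ 2 - z i ^ 2| = |y i + z i| * |y i - z i| := by
      rw [← abs_mul]; ring_nf
    rw [habs]
    have h3 : |y i + z i| ≤ 2 := (abs_add_le _ _).trans (by linarith)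
    have h4 : (0:ℝ) ≤ |y i - z i| := abs_nonneg _
    nlinarith
  calc ∑ i, |y i ^ 2 - z i ^ 2| ≤ ∑ _i : Fin n, 2 * dist y z := Finset.sum_le_sum fun i _ => key i
    _ = 2 * n * dist y z := by simp [Finset.sum_const, Finset.card_univ]; ring

lemma abs_le_one_of_mem {n : ℕ} {y : Fin n → ℝ} (h : ∑ i, y i ^ 2 ≤ 1) (i : Fin n) : |y i| ≤ 1 := by
  have h1 : y i ^ 2 ≤ 1 := le_trans (Finset.single_le_sum (fun j _ => sq_nonneg (y j)) (Finset.mem_univ i)) h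
  rw [abs_le]; constructor <;> nlinarith

lemma chart_lip (n : ℕ) {δ : ℝ} (hδ : 0 < δ) (hδ1 : δ ≤ 1) (ε : ℝ) (hε : |ε| = 1) (j : Fin (n+1)) :
    LipschitzOnWith (chartK n δ) (chart n ε j) {y | ∑ i, y i ^ 2 ≤ 1 - δ} := by
  rw [lipschitzOnWith_iff_dist_le_mul]
  intro y hy z hz
  simp only [Set.mem_setOf_eq] at hy hz
  set d := dist y z with hd
  have hd0 : 0 ≤ d := dist_nonneg
  have hsδ : 0 < Real.sqrt δ := Real.sqrt_pos.mpr hδ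
  set L : ℝ := 1 + n / Real.sqrt δ with hL
  have hL0 : 0 ≤ (n:ℝ) / Real.sqrt δ := by positivity
  have hL1 : 1 ≤ L := by rw [hL]; linarith
  have hcoordj : dist (chart n ε j y j) (chart n ε j z j) ≤ L * d := by
    show dist ((j.insertNth (ε * Real.sqrt (1 - ∑ i, y i ^ 2)) y : Fin (n+1) → ℝ) j)
      ((j.insertNth (ε * Real.sqrt (1 - ∑ i, z i ^ 2)) z : Fin (n+1) → ℝ) j) ≤ _
    rw [Fin.insertNth_apply_same, Fin.insertNth_apply_same, Real.dist_eq, ← mul_sub, abs_mul, hε,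
      one_mul]
    have h1 : δ ≤ 1 - ∑ i, y i ^ 2 := by linarith
    have h2 : δ ≤ 1 - ∑ i, z i ^ 2 := by linarith
    refine (sqrt_sub_le hδ h1 h2).trans ?_
    have h3 : |1 - (∑ i, y i ^ 2) - (1 - ∑ i, z i ^ 2)| = |(∑ i, y i ^ 2) - ∑ i, z i ^ 2| := by
      rw [show 1 - (∑ i, y i ^ 2) - (1 - ∑ i, z i ^ 2) = -((∑ i, y i ^ 2) - ∑ i, z i ^ 2) by ring,
        abs_neg]
    rw [h3]
    calc |(∑ i, y i ^ 2) - ∑ i, z i ^ 2| / (2 * Real.sqrt δ)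
        ≤ (2 * n * d) / (2 * Real.sqrt δ) := by
          gcongr
          exact sum_sq_diff (abs_le_one_of_mem (by linarith)) (abs_le_one_of_mem (by linarith))
      _ = ((n:ℝ) / Real.sqrt δ) * d := by field_simp
      _ ≤ L * d := mul_le_mul_of_nonneg_right (by linarith) hd0
  have hcoordi : ∀ i : Fin n,
      dist (chart n ε j y (j.succAbove i)) (chart n ε j z (j.succAbove i)) ≤ L * d := by
    intro i
    show dist ((j.insertNth (ε * Real.sqrt (1 - ∑ i, y i ^ 2)) y : Fin (n+1) → ℝ) (j.succAbove i))
      ((j.insertNth (ε * Real.sqrt (1 - ∑ i, z i ^ 2)) z : Fin (n+1) → ℝ) (j.succAbove i)) ≤ _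
    rw [Fin.insertNth_apply_succAbove, Fin.insertNth_apply_succAbove]
    calc dist (y i) (z i) ≤ d := dist_le_pi_dist y z i
      _ = 1 * d := (one_mul d).symm
      _ ≤ L * d := mul_le_mul_of_nonneg_right hL1 hd0
  rw [EuclideanSpace.dist_eq]
  have hsum : ∑ i : Fin (n+1), dist (chart n ε j y i) (chart n ε j z i) ^ 2
      ≤ (n+1) * (L * d) ^ 2 := by
    rw [Fin.sum_univ_succAbove (fun i => dist (chart n ε j y i) (chart n ε j z i) ^ 2) j]
    have hLd0 : 0 ≤ L * d := by positivity
    have h1 : dist (chart n ε j y j) (chart n ε j z j) ^ 2 ≤ (L*d)^2 := by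
      have := dist_nonneg (x := chart n ε j y j) (y := chart n ε j z j)
      nlinarith [hcoordj]
    have h2 : ∑ i : Fin n, dist (chart n ε j y (j.succAbove i)) (chart n ε j z (j.succAbove i)) ^ 2
        ≤ n * (L*d)^2 := by
      calc _ ≤ ∑ _i : Fin n, (L*d)^2 := by
              refine Finset.sum_le_sum fun i _ => ?_
              have := dist_nonneg (x := chart n ε j y (j.succAbove i)) (y := chart n ε j z (j.succAbove i))
              nlinarith [hcoordi i]
        _ = n * (L*d)^2 := by simp [Finset.sum_const, Finset.card_univ]
    push_cast
    linarith
  calc Real.sqrt (∑ i : Fin (n+1), dist (chart n ε j y i) (chart n ε j z i) ^ 2)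
      ≤ Real.sqrt ((n+1) * (L * d) ^ 2) := Real.sqrt_le_sqrt hsum
    _ = Real.sqrt (n+1) * (L * d) := by
        rw [Real.sqrt_mul (by positivity), Real.sqrt_sq (by positivity)]
    _ = (Real.sqrt (n+1) * L) * d := by ring
    _ ≤ (chartK n δ : ℝ) * d := by
        refine mul_le_mul_of_nonneg_right ?_ hd0
        rw [chartK, Real.coe_toNNReal _ (by positivity)]

lemma cover_eq {n : ℕ} (θ : EuclideanSpace ℝ (Fin (n+1)))
    (hθ : ∑ i : Fin (n+1), θ i ^ 2 = 1) (j : Fin (n+1)) :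
    chart n (if 0 ≤ θ j then 1 else -1) j (j.removeNth θ) = θ ∧
    ∑ i : Fin n, (j.removeNth θ) i ^ 2 = 1 - θ j ^ 2 := by
  have hsum : ∑ i : Fin n, (j.removeNth θ) i ^ 2 = 1 - θ j ^ 2 := by
    have := Fin.sum_univ_succAbove (fun i => θ i ^ 2) j
    rw [hθ] at this
    simp only [Fin.removeNth]
    linarith
  refine ⟨?_, hsum⟩
  have hval : (if 0 ≤ θ j then (1:ℝ) else -1) * Real.sqrt (1 - ∑ i, (j.removeNth θ) i ^ 2)
      = θ j := by
    rw [hsum, show (1:ℝ) - (1 - θ j ^ 2) = θ j ^ 2 by ring, Real.sqrt_sq_eq_abs]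
    rcases le_or_gt 0 (θ j) with h | h
    · rw [if_pos h, one_mul, abs_of_nonneg h]
    · rw [if_neg (not_le.mpr h), abs_of_neg h]; ring
  show WithLp.toLp 2 (j.insertNth _ (j.removeNth θ) : Fin (n+1) → ℝ) = θ
  rw [hval, Fin.insertNth_self_removeNth]

lemma chart_image_meas (n : ℕ) {δ : ℝ} (hδ : 0 < δ) (hδ1 : δ ≤ 1) (ε : ℝ) (hε : |ε| = 1)
    (j : Fin (n+1)) {s : Set (Fin n → ℝ)} (hs : s ⊆ {y | ∑ i, y i ^ 2 ≤ 1 - δ}) :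
    μH[(n:ℝ)] (chart n ε j '' s) ≤ (chartK n δ : ENNReal) ^ (n:ℝ) * volume s := by
  have h1 := ((chart_lip n hδ hδ1 ε hε j).mono hs).hausdorffMeasure_image_le
    (show (0:ℝ) ≤ n by positivity)
  refine h1.trans ?_
  gcongr
  have h2 : (μH[(n:ℝ)] : Measure (Fin n → ℝ)) = volume := by
    rw [← MeasureTheory.hausdorffMeasure_pi_real (ι := Fin n)]
    norm_num
  rw [h2]

lemma meas_sub (n : ℕ) {δ : ℝ} (hδ : 0 < δ) (hδ1 : δ ≤ 1) (J : Finset (Fin (n+1)))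
    (T : Set (Fin n → ℝ)) (A : Set (EuclideanSpace ℝ (Fin (n+1))))
    (hA : ∀ θ ∈ A, ∑ i : Fin (n+1), θ i ^ 2 = 1)
    (hcov : ∀ θ ∈ A, ∃ j ∈ J, 2*δ ≤ θ j ^ 2)
    (hT : ∀ θ ∈ A, ∀ j ∈ J, j.removeNth θ ∈ T) :
    μH[(n:ℝ)] A ≤ (J.card : ENNReal) * 2 *
      ((chartK n δ : ENNReal) ^ (n:ℝ) * volume (T ∩ {y | ∑ i, y i ^ 2 ≤ 1 - δ})) := by
  set D := {y : Fin n → ℝ | ∑ i, y i ^ 2 ≤ 1 - δ} with hD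
  have hsubD : T ∩ D ⊆ D := Set.inter_subset_right
  have hsub : A ⊆ ⋃ j ∈ J, (chart n 1 j '' (T ∩ D) ∪ chart n (-1) j '' (T ∩ D)) := by
    intro θ hθ
    obtain ⟨j, hjJ, hj2⟩ := hcov θ hθ
    have hc := cover_eq θ (hA θ hθ) j
    have hmem : j.removeNth θ ∈ T ∩ D := by
      refine ⟨hT θ hθ j hjJ, ?_⟩
      simp only [hD, Set.mem_setOf_eq]
      rw [hc.2]; linarith
    refine Set.mem_biUnion hjJ ?_
    rcases le_or_gt 0 (θ j) with h | h
    · rw [if_pos h] at hc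
      exact Or.inl ⟨_, hmem, hc.1⟩
    · rw [if_neg (not_le.mpr h)] at hc
      exact Or.inr ⟨_, hmem, hc.1⟩
  calc μH[(n:ℝ)] A ≤ μH[(n:ℝ)] (⋃ j ∈ J, (chart n 1 j '' (T ∩ D) ∪ chart n (-1) j '' (T ∩ D))) :=
        measure_mono hsub
    _ ≤ ∑ j ∈ J, μH[(n:ℝ)] (chart n 1 j '' (T ∩ D) ∪ chart n (-1) j '' (T ∩ D)) :=
        measure_biUnion_finset_le _ _
    _ ≤ ∑ _j ∈ J, 2 * ((chartK n δ : ENNReal) ^ (n:ℝ) * volume (T ∩ D)) := by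
        refine Finset.sum_le_sum fun j _ => ?_
        refine (measure_union_le _ _).trans ?_
        rw [two_mul]
        gcongr
        · exact chart_image_meas n hδ hδ1 1 (by norm_num) j hsubD
        · exact chart_image_meas n hδ hδ1 (-1) (by norm_num) j hsubD
    _ = (J.card : ENNReal) * 2 * ((chartK n δ : ENNReal) ^ (n:ℝ) * volume (T ∩ D)) := by
        rw [Finset.sum_const, nsmul_eq_mul]; ring

lemma card_filter_lt (n m : ℕ) (hmn : m ≤ n) :
    (Finset.univ.filter fun i : Fin n => (i:ℕ) < m).card = m := by
  refine Finset.card_eq_of_bijective (fun i hi => ⟨i, lt_of_lt_of_le hi hmn⟩) ?_ ?_ ?_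
  · intro a ha
    simp only [Finset.mem_filter, Finset.mem_univ, true_and] at ha
    exact ⟨a, ha, rfl⟩
  · intro i hi
    simp only [Finset.mem_filter, Finset.mem_univ, true_and]
    exact hi
  · intro i j hi hj hij
    simpa using congrArg Fin.val hij

lemma norm_one_sum_sq {n : ℕ} (θ : EuclideanSpace ℝ (Fin (n+1))) (hθ : ‖θ‖ = 1) :
    ∑ i : Fin (n+1), θ i ^ 2 = 1 := by
  have h := EuclideanSpace.norm_eq θ
  rw [hθ] at h
  have h2 : ∑ i : Fin (n+1), ‖θ i‖ ^ 2 = 1 := Real.sqrt_eq_one.mp h.symm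
  rw [← h2]
  exact Finset.sum_congr rfl fun i _ => by rw [Real.norm_eq_abs, sq_abs]

lemma vol_D_le (n : ℕ) {δ : ℝ} (hδ : 0 ≤ δ) (hδ1 : δ ≤ 1) (T : Set (Fin n → ℝ)) :
    volume (T ∩ {y : Fin n → ℝ | ∑ i, y i ^ 2 ≤ 1 - δ}) ≤ ENNReal.ofReal 2 ^ n := by
  have hsub : T ∩ {y : Fin n → ℝ | ∑ i, y i ^ 2 ≤ 1 - δ} ⊆
      Set.univ.pi fun _ : Fin n => Set.Icc (-1 : ℝ) 1 := by
    rintro y ⟨-, hy⟩ i -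
    have := abs_le_one_of_mem (le_trans hy (by linarith)) i
    rw [abs_le] at this
    exact ⟨this.1, this.2⟩
  refine (measure_mono hsub).trans ?_
  rw [volume_pi_pi]
  simp [Real.volume_Icc]
  norm_num

lemma meas_sphere_lt_top (n : ℕ) :
    μH[(n:ℝ)] {θ : EuclideanSpace ℝ (Fin (n+1)) | ‖θ‖ = 1} < ⊤ := by
  set δ : ℝ := 1/(2*(n+1)) with hδdef
  have hn1 : (0:ℝ) < (n:ℝ) + 1 := by positivity
  have hδ : 0 < δ := by positivity
  have hδ1 : δ ≤ 1 := by
    rw [hδdef, div_le_one (by positivity)]; linarith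
  have hcov : ∀ θ ∈ {θ : EuclideanSpace ℝ (Fin (n+1)) | ‖θ‖ = 1},
      ∃ j ∈ (Finset.univ : Finset (Fin (n+1))), 2*δ ≤ θ j ^ 2 := by
    intro θ hθ
    have hsum : ∑ _j : Fin (n+1), (2*δ) = 1 := by
      rw [Finset.sum_const, Finset.card_univ, Fintype.card_fin, nsmul_eq_mul, hδdef]
      field_simp
      push_cast
      ring
    have h1 : ∑ j : Fin (n+1), (2*δ) ≤ ∑ j : Fin (n+1), θ j ^ 2 := by
      rw [hsum, norm_one_sum_sq θ hθ]
    exact Finset.exists_le_of_sum_le ⟨0, Finset.mem_univ 0⟩ h1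
  have key := meas_sub n hδ hδ1 Finset.univ Set.univ _
    (fun θ hθ => norm_one_sum_sq θ hθ) hcov (fun θ _ j _ => Set.mem_univ _)
  refine lt_of_le_of_lt key ?_
  have hK : (chartK n δ : ENNReal) ^ (n:ℝ) ≠ ⊤ :=
    (ENNReal.rpow_lt_top_of_nonneg (by positivity) ENNReal.coe_ne_top).ne
  have hvol : volume (Set.univ ∩ {y : Fin n → ℝ | ∑ i, y i ^ 2 ≤ 1 - δ}) ≠ ⊤ :=
    (lt_of_le_of_lt (vol_D_le n hδ.le hδ1 _) (ENNReal.pow_lt_top ENNReal.ofReal_lt_top)).ne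
  exact ENNReal.mul_lt_top
    (ENNReal.mul_ne_top (ENNReal.natCast_ne_top _) (by norm_num)).lt_top
    (ENNReal.mul_ne_top hK hvol).lt_top

lemma meas_tube (n k : ℕ) (hkn : k + 1 < n) :
    ∃ C : ENNReal, C ≠ ⊤ ∧ ∀ t : ℝ, 0 < t → t ≤ 1/2 →
      μH[(n:ℝ)] {θ : EuclideanSpace ℝ (Fin (n+1)) | ‖θ‖ = 1 ∧
        Real.sqrt (∑ i : Fin (n+1), if (i:ℕ) < n - k then θ i ^ 2 else 0) ≤ t} ≤
      C * ENNReal.ofReal t ^ (n - k) := by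
  set δ : ℝ := 3/(8*(n+1)) with hδdef
  have hn1 : (0:ℝ) < (n:ℝ) + 1 := by positivity
  have hδ : 0 < δ := by positivity
  have hδ1 : δ ≤ 1 := by
    rw [hδdef, div_le_one (by positivity)]; linarith
  have hK : (chartK n δ : ENNReal) ^ (n:ℝ) ≠ ⊤ :=
    (ENNReal.rpow_lt_top_of_nonneg (by positivity) ENNReal.coe_ne_top).ne
  refine ⟨((n:ENNReal)+1) * 2 * ((chartK n δ : ENNReal) ^ (n:ℝ) *
      (ENNReal.ofReal 2 ^ (n-k) * ENNReal.ofReal 2 ^ n)), ?_, ?_⟩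
  · exact ENNReal.mul_ne_top
      (ENNReal.mul_ne_top (by simp [ENNReal.add_ne_top]) (by norm_num))
      (ENNReal.mul_ne_top hK
        (ENNReal.mul_ne_top (ENNReal.pow_ne_top ENNReal.ofReal_ne_top)
          (ENNReal.pow_ne_top ENNReal.ofReal_ne_top)))
  intro t ht ht2
  set A := {θ : EuclideanSpace ℝ (Fin (n+1)) | ‖θ‖ = 1 ∧
      Real.sqrt (∑ i : Fin (n+1), if (i:ℕ) < n - k then θ i ^ 2 else 0) ≤ t} with hA
  set J : Finset (Fin (n+1)) := Finset.univ.filter (fun j : Fin (n+1) => ¬ (j:ℕ) < n - k)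
    with hJ
  set T : Set (Fin n → ℝ) := {y | ∀ i : Fin n, (i:ℕ) < n - k → |y i| ≤ t} with hT
  -- partial sums are bounded by t^2 on A
  have hpart : ∀ θ ∈ A, ∑ i : Fin (n+1), (if (i:ℕ) < n - k then θ i ^ 2 else 0) ≤ t^2 := by
    rintro θ ⟨-, hθ2⟩
    have hnn : 0 ≤ ∑ i : Fin (n+1), (if (i:ℕ) < n - k then θ i ^ 2 else 0) :=
      Finset.sum_nonneg fun i _ => by split <;> simp [sq_nonneg]
    calc ∑ i : Fin (n+1), (if (i:ℕ) < n - k then θ i ^ 2 else 0)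
        = Real.sqrt (∑ i : Fin (n+1), (if (i:ℕ) < n - k then θ i ^ 2 else 0)) ^ 2 :=
          (Real.sq_sqrt hnn).symm
      _ ≤ t ^ 2 := by
          have := Real.sqrt_nonneg (∑ i : Fin (n+1), (if (i:ℕ) < n - k then θ i ^ 2 else 0))
          nlinarith
  have hcov : ∀ θ ∈ A, ∃ j ∈ J, 2*δ ≤ θ j ^ 2 := by
    intro θ hθA
    have hsplit := Finset.sum_filter_add_sum_filter_not Finset.univ
      (fun j : Fin (n+1) => (j:ℕ) < n - k) (fun j => θ j ^ 2)
    rw [norm_one_sum_sq θ hθA.1] at hsplit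
    have hfil : ∑ j ∈ Finset.univ.filter (fun j : Fin (n+1) => (j:ℕ) < n - k), θ j ^ 2
        = ∑ i : Fin (n+1), (if (i:ℕ) < n - k then θ i ^ 2 else 0) :=
      Finset.sum_filter _ _
    have hJsum : 3/4 ≤ ∑ j ∈ J, θ j ^ 2 := by
      have h1 := hpart θ hθA
      have ht4 : t^2 ≤ 1/4 := by nlinarith
      rw [← hfil] at h1
      rw [hJ]
      linarith
    have hcard : (J.card : ℝ) ≤ (n:ℝ) + 1 := by
      have := Finset.card_filter_le (Finset.univ : Finset (Fin (n+1)))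
        (fun j : Fin (n+1) => ¬ (j:ℕ) < n - k)
      rw [Finset.card_univ, Fintype.card_fin] at this
      exact_mod_cast this
    have hconst : ∑ _j ∈ J, (2*δ) ≤ ∑ j ∈ J, θ j ^ 2 := by
      rw [Finset.sum_const, nsmul_eq_mul]
      have h2δ : 2*δ = 3/(4*((n:ℝ)+1)) := by rw [hδdef]; field_simp; ring
      have : (J.card : ℝ) * (2*δ) ≤ 3/4 := by
        rw [h2δ]
        calc (J.card : ℝ) * (3/(4*((n:ℝ)+1))) ≤ ((n:ℝ)+1) * (3/(4*((n:ℝ)+1))) :=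
              mul_le_mul_of_nonneg_right hcard (by positivity)
          _ = 3/4 := by field_simp
      linarith
    have hne : J.Nonempty := by
      refine ⟨Fin.last n, ?_⟩
      simp only [hJ, Finset.mem_filter, Finset.mem_univ, true_and, Fin.val_last, not_lt]
      exact Nat.sub_le n k
    exact Finset.exists_le_of_sum_le hne hconst
  have hTmem : ∀ θ ∈ A, ∀ j ∈ J, j.removeNth θ ∈ T := by
    intro θ hθA j hjJ
    have hjval : n - k ≤ (j:ℕ) := by
      simp only [hJ, Finset.mem_filter, Finset.mem_univ, true_and, not_lt] at hjJ
      exact hjJ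
    intro i hi
    have hlt : (i.castSucc : Fin (n+1)) < j := by
      rw [Fin.lt_def]
      simp only [Fin.coe_castSucc]
      exact lt_of_lt_of_le hi hjval
    have hre : j.removeNth θ i = θ i.castSucc := by
      rw [Fin.removeNth, Fin.succAbove_of_castSucc_lt j i hlt]
    rw [hre]
    have hsq : θ i.castSucc ^ 2 ≤ t ^ 2 := by
      refine le_trans ?_ (hpart θ hθA)
      have := Finset.single_le_sum (f := fun i' : Fin (n+1) =>
        if (i':ℕ) < n - k then θ i' ^ 2 else 0)
        (fun i2 _ => by dsimp only; split <;> simp [sq_nonneg]) (Finset.mem_univ i.castSucc)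
      simpa [Fin.coe_castSucc, hi] using this
    calc |θ i.castSucc| = Real.sqrt (θ i.castSucc ^ 2) := (Real.sqrt_sq_eq_abs _).symm
      _ ≤ Real.sqrt (t ^ 2) := Real.sqrt_le_sqrt hsq
      _ = t := Real.sqrt_sq ht.le
  have key := meas_sub n hδ hδ1 J T A (fun θ hθA => norm_one_sum_sq θ hθA.1) hcov hTmem
  refine key.trans ?_
  -- volume of the box
  have hvol : volume (T ∩ {y : Fin n → ℝ | ∑ i, y i ^ 2 ≤ 1 - δ}) ≤
      ENNReal.ofReal (2*t) ^ (n-k) * ENNReal.ofReal 2 ^ n := by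
    have hsub : T ∩ {y : Fin n → ℝ | ∑ i, y i ^ 2 ≤ 1 - δ} ⊆
        Set.univ.pi fun i : Fin n =>
          Set.Icc (-(if (i:ℕ) < n - k then t else 1)) (if (i:ℕ) < n - k then t else 1) := by
      rintro y ⟨hyT, hyD⟩ i -
      dsimp only
      split
      · next h =>
          have := hyT i h
          rw [abs_le] at this
          exact ⟨this.1, this.2⟩
      · have := abs_le_one_of_mem (le_trans hyD (by linarith)) i
        rw [abs_le] at this
        exact ⟨this.1, this.2⟩
    refine (measure_mono hsub).trans ?_
    rw [volume_pi_pi]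
    have heach : ∀ i : Fin n,
        volume (Set.Icc (-(if (i:ℕ) < n - k then t else 1)) (if (i:ℕ) < n - k then t else 1))
        = if (i:ℕ) < n - k then ENNReal.ofReal (2*t) else ENNReal.ofReal 2 := by
      intro i
      split
      · rw [Real.volume_Icc]; congr 1; ring
      · rw [Real.volume_Icc]; norm_num
    rw [Finset.prod_congr rfl fun i _ => heach i, Finset.prod_ite, Finset.prod_const,
      Finset.prod_const, card_filter_lt n (n-k) (Nat.sub_le n k)]
    have hcard2 : (Finset.univ.filter fun i : Fin n => ¬ (i:ℕ) < n - k).card ≤ n := by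
      refine le_trans (Finset.card_filter_le _ _) ?_
      rw [Finset.card_univ, Fintype.card_fin]
    exact mul_le_mul_right (pow_le_pow_right₀
      (ENNReal.one_le_ofReal.mpr (by norm_num)) hcard2) _
  -- final assembly
  have hcardJ : (J.card : ENNReal) ≤ (n:ENNReal) + 1 := by
    have := Finset.card_filter_le (Finset.univ : Finset (Fin (n+1)))
      (fun j : Fin (n+1) => ¬ (j:ℕ) < n - k)
    rw [Finset.card_univ, Fintype.card_fin] at this
    exact_mod_cast this
  calc (J.card : ENNReal) * 2 * ((chartK n δ : ENNReal) ^ (n:ℝ) *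
        volume (T ∩ {y | ∑ i, y i ^ 2 ≤ 1 - δ}))
      ≤ ((n:ENNReal) + 1) * 2 * ((chartK n δ : ENNReal) ^ (n:ℝ) *
        (ENNReal.ofReal (2*t) ^ (n-k) * ENNReal.ofReal 2 ^ n)) := by
        gcongr
    _ = ((n:ENNReal)+1) * 2 * ((chartK n δ : ENNReal) ^ (n:ℝ) *
        (ENNReal.ofReal 2 ^ (n-k) * ENNReal.ofReal 2 ^ n)) * ENNReal.ofReal t ^ (n-k) := by
        rw [show ENNReal.ofReal (2*t) = ENNReal.ofReal 2 * ENNReal.ofReal t from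
          ENNReal.ofReal_mul (by norm_num)]
        rw [mul_pow]
        ring

lemma summable_bound (p : ℝ) (N : ℕ) (hp1 : 1 ≤ p) (hpN : p ≤ (N:ℝ)) (hN : 2 ≤ N) :
    Summable (fun m : ℕ =>
      (Real.exp ((m:ℝ)+1) / ((m:ℝ)+1)) ^ p * Real.exp (-(m:ℝ)) ^ N) := by
  have hb : ∀ m : ℕ, (Real.exp ((m:ℝ)+1) / ((m:ℝ)+1)) ^ p * Real.exp (-(m:ℝ)) ^ N
      = Real.exp p * (Real.exp ((m:ℝ)*(p - N)) / ((m:ℝ)+1) ^ p) := by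
    intro m
    rw [Real.div_rpow (Real.exp_pos _).le (by positivity), ← Real.exp_nat_mul,
      ← Real.exp_mul, div_mul_eq_mul_div, ← Real.exp_add,
      show Real.exp p * (Real.exp ((m:ℝ)*(p-N)) / ((m:ℝ)+1)^p)
        = (Real.exp p * Real.exp ((m:ℝ)*(p-N))) / ((m:ℝ)+1)^p from (mul_div_assoc _ _ _).symm,
      ← Real.exp_add]
    congr 2
    push_cast
    ring
  have hnn : ∀ m : ℕ, 0 ≤ (Real.exp ((m:ℝ)+1) / ((m:ℝ)+1)) ^ p * Real.exp (-(m:ℝ)) ^ N := by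
    intro m; positivity
  rcases le_or_gt (3/2 : ℝ) p with hp32 | hp32
  · -- p ≥ 3/2 : compare with p-series of exponent 3/2
    have hsum : Summable (fun m : ℕ => Real.exp p * (1 / ((m:ℝ)+1) ^ (3/2 : ℝ))) := by
      refine Summable.mul_left _ ?_
      have h1 : Summable (fun m : ℕ => 1 / ((m:ℝ)) ^ (3/2 : ℝ)) :=
        Real.summable_one_div_nat_rpow.mpr (by norm_num)
      have := (summable_nat_add_iff 1).mpr h1
      refine this.congr fun m => ?_
      push_cast
      ring_nf
    refine Summable.of_nonneg_of_le hnn (fun m => ?_) hsum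
    rw [hb m]
    have h1 : Real.exp ((m:ℝ)*(p - N)) ≤ 1 := by
      rw [Real.exp_le_one_iff]
      have : p - (N:ℝ) ≤ 0 := by linarith
      have hm : (0:ℝ) ≤ m := Nat.cast_nonneg m
      nlinarith
    have h2 : ((m:ℝ)+1) ^ (3/2 : ℝ) ≤ ((m:ℝ)+1) ^ p :=
      Real.rpow_le_rpow_of_exponent_le (by have h0 : (0:ℝ) ≤ (m:ℝ) := Nat.cast_nonneg m; linarith) hp32
    have h3 : (0:ℝ) < ((m:ℝ)+1) ^ (3/2:ℝ) := by positivity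
    refine mul_le_mul_of_nonneg_left ?_ (Real.exp_pos p).le
    calc Real.exp ((m:ℝ)*(p-N)) / ((m:ℝ)+1) ^ p ≤ 1 / ((m:ℝ)+1) ^ p :=
          by gcongr
      _ ≤ 1 / ((m:ℝ)+1) ^ (3/2:ℝ) := one_div_le_one_div_of_le h3 h2
  · -- p < 3/2 : geometric comparison with ratio exp(-1/2)
    have hq : (1/2 : ℝ) ≤ (N:ℝ) - p := by
      have : (2:ℝ) ≤ (N:ℝ) := by exact_mod_cast hN
      linarith
    have hsum : Summable (fun m : ℕ => Real.exp p * Real.exp (-(1/2) : ℝ) ^ m) := by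
      refine Summable.mul_left _ (summable_geometric_of_lt_one (Real.exp_pos _).le ?_)
      rw [Real.exp_lt_one_iff]; norm_num
    refine Summable.of_nonneg_of_le hnn (fun m => ?_) hsum
    rw [hb m]
    have h1 : Real.exp ((m:ℝ)*(p - N)) ≤ Real.exp (-(1/2):ℝ) ^ m := by
      rw [← Real.exp_nat_mul, Real.exp_le_exp]
      have hm : (0:ℝ) ≤ m := Nat.cast_nonneg m
      nlinarith
    have h2 : (1:ℝ) ≤ ((m:ℝ)+1) ^ p := by
      have := Real.rpow_le_rpow_of_exponent_le (show (1:ℝ) ≤ (m:ℝ)+1 by have h0 : (0:ℝ) ≤ (m:ℝ) := Nat.cast_nonneg m; linarith)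
        (show (0:ℝ) ≤ p by linarith)
      rwa [Real.rpow_zero] at this
    refine mul_le_mul_of_nonneg_left ?_ (Real.exp_pos p).le
    calc Real.exp ((m:ℝ)*(p-N)) / ((m:ℝ)+1) ^ p ≤ Real.exp ((m:ℝ)*(p-N)) / 1 :=
          div_le_div_of_nonneg_left (Real.exp_pos _).le one_pos h2
      _ = Real.exp ((m:ℝ)*(p-N)) := div_one _
      _ ≤ Real.exp (-(1/2):ℝ) ^ m := h1

end Stmt4Aux

/-- For `0 ≤ k < n-1` and `1 ≤ p ≤ n-k`, the function
`f̃(θ) = |θ'|⁻¹ (1 - log|θ'|)⁻¹` on `Sⁿ`, `θ' = (θ₁,…,θ_{n-k})`,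
belongs to `L^p(Sⁿ)`. -/
theorem stmt4 (n k : ℕ) (hkn : k + 1 < n) (p : ℝ) (hp1 : 1 ≤ p) (hp2 : p ≤ (n : ℝ) - k) :
    MemLp (fun θ : EuclideanSpace ℝ (Fin (n + 1)) =>
        (Real.sqrt (∑ i : Fin (n + 1), if (i : ℕ) < n - k then (θ i) ^ 2 else 0))⁻¹ *
        (1 - Real.log
          (Real.sqrt (∑ i : Fin (n + 1), if (i : ℕ) < n - k then (θ i) ^ 2 else 0)))⁻¹)
      (ENNReal.ofReal p)
      ((μH[(n : ℝ)]).restrict (Metric.sphere (0 : EuclideanSpace ℝ (Fin (n + 1))) 1)) := by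
  have hkn' : k ≤ n := by omega
  have hnk2 : 2 ≤ n - k := by omega
  have hcast : ((n - k : ℕ) : ℝ) = (n : ℝ) - k := by
    push_cast [Nat.cast_sub hkn']
    ring
  have hp0 : (0:ℝ) < p := by linarith
  set E := EuclideanSpace ℝ (Fin (n+1))
  set g : E → ℝ :=
    fun θ => Real.sqrt (∑ i : Fin (n+1), if (i:ℕ) < n - k then (θ i)^2 else 0) with hgdef
  have hgc : Continuous g := by
    apply Real.continuous_sqrt.comp
    apply continuous_finset_sum
    intro i _
    by_cases h : (i:ℕ) < n - k
    · simp only [h, ↓reduceIte]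
      exact (continuous_pow 2).comp (EuclideanSpace.proj (𝕜 := ℝ) i).continuous
    · simpa [h] using (continuous_const : Continuous fun _ : E => (0:ℝ))
  have hgnn : ∀ θ, 0 ≤ g θ := fun θ => Real.sqrt_nonneg _
  set f : E → ℝ := fun θ => (g θ)⁻¹ * (1 - Real.log (g θ))⁻¹ with hfdef
  have hfm : Measurable f := (hgc.measurable.inv).mul
    ((measurable_const.sub (Real.measurable_log.comp hgc.measurable)).inv)
  show MemLp f _ _
  refine ⟨hfm.aestronglyMeasurable, ?_⟩
  have hpne0 : (ENNReal.ofReal p) ≠ 0 := by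
    simp only [ne_eq, ENNReal.ofReal_eq_zero, not_le]
    linarith
  rw [eLpNorm_eq_lintegral_rpow_enorm_toReal hpne0 ENNReal.ofReal_ne_top,
    ENNReal.toReal_ofReal hp0.le]
  refine ENNReal.rpow_lt_top_of_nonneg (by positivity) ?_
  -- the sets
  set Z : Set E := {θ | g θ = 0} with hZdef
  set B : ℕ → Set E := fun m => {θ | ‖θ‖ = 1 ∧ Real.exp (-((m:ℝ)+1)) < g θ ∧
    g θ ≤ Real.exp (-(m:ℝ))} with hBdef
  -- covering of the sphere
  have hZB : Metric.sphere (0:E) 1 ⊆ Z ∪ ⋃ m, B m := by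
    intro θ hθ
    rw [mem_sphere_zero_iff_norm] at hθ
    rcases eq_or_lt_of_le (hgnn θ) with h0 | h0
    · exact Or.inl h0.symm
    · right
      have hg1 : g θ ≤ 1 := by
        rw [hgdef]
        rw [Real.sqrt_le_one]
        calc (∑ i : Fin (n+1), if (i:ℕ) < n - k then (θ i)^2 else 0)
            ≤ ∑ i : Fin (n+1), θ i ^ 2 := by
              refine Finset.sum_le_sum fun i _ => ?_
              split <;> simp [sq_nonneg]
          _ = 1 := Stmt4Aux.norm_one_sum_sq θ hθ
      have hlog : 0 ≤ -Real.log (g θ) := by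
        have := Real.log_nonpos (hgnn θ) hg1
        linarith
      refine Set.mem_iUnion.mpr ⟨⌊-Real.log (g θ)⌋₊, hθ, ?_, ?_⟩
      · have h1 : -Real.log (g θ) < ⌊-Real.log (g θ)⌋₊ + 1 := Nat.lt_floor_add_one _
        have := Real.exp_log h0
        calc Real.exp (-((⌊-Real.log (g θ)⌋₊:ℝ)+1)) < Real.exp (Real.log (g θ)) := by
              rw [Real.exp_lt_exp]; linarith
          _ = g θ := this
      · have h2 : (⌊-Real.log (g θ)⌋₊:ℝ) ≤ -Real.log (g θ) := Nat.floor_le hlog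
        calc g θ = Real.exp (Real.log (g θ)) := (Real.exp_log h0).symm
          _ ≤ Real.exp (-(⌊-Real.log (g θ)⌋₊:ℝ)) := by
              rw [Real.exp_le_exp]; linarith
  -- the measure bounds
  obtain ⟨C, hCne, hC⟩ := Stmt4Aux.meas_tube n k hkn
  set Dc : ENNReal := C + μH[(n:ℝ)] {θ : E | ‖θ‖ = 1} with hDcdef
  have hDcne : Dc ≠ ⊤ := ENNReal.add_ne_top.mpr ⟨hCne, (Stmt4Aux.meas_sphere_lt_top n).ne⟩
  have hexp1 : Real.exp (-1 : ℝ) ≤ 1/2 := by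
    have h2e : (2:ℝ) ≤ Real.exp 1 := by
      have := Real.add_one_le_exp 1; linarith
    rw [Real.exp_neg]
    calc (Real.exp 1)⁻¹ ≤ 2⁻¹ := inv_anti₀ (by norm_num) h2e
      _ = 1/2 := by norm_num
  have hBmeas : ∀ m : ℕ, μH[(n:ℝ)] (B m) ≤
      Dc * (ENNReal.ofReal (Real.exp (-(m:ℝ)))) ^ (n - k) := by
    intro m
    match m with
    | 0 =>
      have hsub : B 0 ⊆ {θ : E | ‖θ‖ = 1} := fun θ hθ => hθ.1
      have h01 : (ENNReal.ofReal (Real.exp (-((0:ℕ):ℝ)))) ^ (n-k) = 1 := by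
        simp
      rw [h01, mul_one]
      calc μH[(n:ℝ)] (B 0) ≤ μH[(n:ℝ)] {θ : E | ‖θ‖ = 1} := measure_mono hsub
        _ ≤ Dc := le_add_self
    | (m+1) =>
      have ht0 : (0:ℝ) < Real.exp (-((m:ℕ)+1:ℝ)) := Real.exp_pos _
      have ht2 : Real.exp (-((m:ℕ)+1:ℝ)) ≤ 1/2 := by
        refine le_trans ?_ hexp1
        rw [Real.exp_le_exp]
        have : (0:ℝ) ≤ (m:ℝ) := Nat.cast_nonneg m
        linarith
      have hsub : B (m+1) ⊆ {θ : E | ‖θ‖ = 1 ∧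
          Real.sqrt (∑ i : Fin (n+1), if (i:ℕ) < n - k then θ i ^ 2 else 0) ≤
            Real.exp (-((m:ℕ)+1:ℝ))} := by
        rintro θ ⟨h1, -, h3⟩
        refine ⟨h1, ?_⟩
        have hcast2 : ((m+1:ℕ):ℝ) = (m:ℝ)+1 := by push_cast; ring
        rw [hcast2] at h3
        exact h3
      calc μH[(n:ℝ)] (B (m+1)) ≤ _ := measure_mono hsub
        _ ≤ C * ENNReal.ofReal (Real.exp (-((m:ℕ)+1:ℝ))) ^ (n-k) := hC _ ht0 ht2
        _ ≤ Dc * (ENNReal.ofReal (Real.exp (-((m+1:ℕ):ℝ)))) ^ (n-k) := by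
            have hcast2 : ((m+1:ℕ):ℝ) = (m:ℝ)+1 := by push_cast; ring
            rw [hcast2]
            exact mul_le_mul_left le_self_add _
    -- pointwise bound constants
  set cm : ℕ → ENNReal :=
    fun m => ENNReal.ofReal (Real.exp ((m:ℝ)+1) / ((m:ℝ)+1)) ^ p with hcm
  have hBint : ∀ m : ℕ, ∫⁻ θ in B m, (‖f θ‖₊ : ENNReal) ^ p ∂μH[(n:ℝ)]
      ≤ cm m * μH[(n:ℝ)] (B m) := by
    intro m
    have hpt : ∀ θ ∈ B m, (‖f θ‖₊ : ENNReal) ^ p ≤ cm m := by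
      rintro θ ⟨-, hlow, hup⟩
      have hgpos : 0 < g θ := lt_trans (Real.exp_pos _) hlow
      have hm1 : (0:ℝ) < (m:ℝ)+1 := by positivity
      have h1 : (g θ)⁻¹ ≤ Real.exp ((m:ℝ)+1) := by
        have := inv_anti₀ (Real.exp_pos (-((m:ℝ)+1))) hlow.le
        rwa [← Real.exp_neg, neg_neg] at this
      have h2 : Real.log (g θ) ≤ -(m:ℝ) := by
        calc Real.log (g θ) ≤ Real.log (Real.exp (-(m:ℝ))) := Real.log_le_log hgpos hup
          _ = -(m:ℝ) := Real.log_exp _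
      have h3 : (m:ℝ)+1 ≤ 1 - Real.log (g θ) := by linarith
      have h4 : (1 - Real.log (g θ))⁻¹ ≤ ((m:ℝ)+1)⁻¹ := inv_anti₀ hm1 h3
      have h5 : 0 ≤ f θ :=
        mul_nonneg (inv_nonneg.mpr (hgnn θ)) (inv_nonneg.mpr (by linarith))
      have h6 : f θ ≤ Real.exp ((m:ℝ)+1) / ((m:ℝ)+1) := by
        calc f θ = (g θ)⁻¹ * (1 - Real.log (g θ))⁻¹ := rfl
          _ ≤ Real.exp ((m:ℝ)+1) * ((m:ℝ)+1)⁻¹ :=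
              mul_le_mul h1 h4 (inv_nonneg.mpr (by linarith)) (Real.exp_pos _).le
          _ = Real.exp ((m:ℝ)+1) / ((m:ℝ)+1) := (div_eq_mul_inv _ _).symm
      calc ((‖f θ‖₊ : ENNReal)) ^ p = ENNReal.ofReal (f θ) ^ p := by
            change ‖f θ‖ₑ ^ p = _
            rw [Real.enorm_eq_ofReal h5]
        _ ≤ ENNReal.ofReal (Real.exp ((m:ℝ)+1) / ((m:ℝ)+1)) ^ p :=
            ENNReal.rpow_le_rpow (ENNReal.ofReal_le_ofReal h6) hp0.le
    calc ∫⁻ θ in B m, (‖f θ‖₊ : ENNReal) ^ p ∂μH[(n:ℝ)]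
        ≤ ∫⁻ _θ in B m, cm m ∂μH[(n:ℝ)] := setLIntegral_mono measurable_const hpt
      _ = cm m * μH[(n:ℝ)] (B m) := setLIntegral_const _ _
  have hZint : ∫⁻ θ in Z, (‖f θ‖₊ : ENNReal) ^ p ∂μH[(n:ℝ)] = 0 := by
    have hzero : ∀ θ ∈ Z, (‖f θ‖₊ : ENNReal) ^ p = 0 := by
      intro θ hθ
      have hfθ : f θ = 0 := by
        have hgθ : g θ = 0 := hθ
        calc f θ = (g θ)⁻¹ * (1 - Real.log (g θ))⁻¹ := rfl
          _ = 0 := by rw [hgθ]; simp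
      rw [hfθ]
      simp [ENNReal.zero_rpow_of_pos hp0]
    refine le_antisymm ?_ (zero_le)
    calc ∫⁻ θ in Z, (‖f θ‖₊ : ENNReal) ^ p ∂μH[(n:ℝ)]
        ≤ ∫⁻ _θ in Z, 0 ∂μH[(n:ℝ)] :=
          setLIntegral_mono measurable_const (fun x hx => le_of_eq (hzero x hx))
      _ = 0 := by simp
  have hsummable := Stmt4Aux.summable_bound p (n-k) hp1 (by rw [hcast]; exact hp2) hnk2
  have hbnn : ∀ m : ℕ,
      0 ≤ (Real.exp ((m:ℝ)+1) / ((m:ℝ)+1)) ^ p * Real.exp (-(m:ℝ)) ^ (n-k) :=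
    fun m => by positivity
  have htsum : ∑' m : ℕ, cm m * (Dc * (ENNReal.ofReal (Real.exp (-(m:ℝ)))) ^ (n-k)) < ⊤ := by
    have heq : ∀ m : ℕ, cm m * (Dc * (ENNReal.ofReal (Real.exp (-(m:ℝ)))) ^ (n-k))
        = Dc * ENNReal.ofReal
            ((Real.exp ((m:ℝ)+1) / ((m:ℝ)+1)) ^ p * Real.exp (-(m:ℝ)) ^ (n-k)) := by
      intro m
      simp only [hcm]
      rw [ENNReal.ofReal_rpow_of_nonneg (by positivity) hp0.le,
        ← ENNReal.ofReal_pow (Real.exp_pos _).le,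
        ENNReal.ofReal_mul (by positivity : (0:ℝ) ≤ (Real.exp ((m:ℝ)+1) / ((m:ℝ)+1)) ^ p)]
      ring
    rw [tsum_congr heq, ENNReal.tsum_mul_left,
      ← ENNReal.ofReal_tsum_of_nonneg hbnn hsummable]
    exact ENNReal.mul_lt_top hDcne.lt_top ENNReal.ofReal_lt_top
  refine ne_of_lt (lt_of_le_of_lt ?_ htsum)
  calc ∫⁻ θ, (‖f θ‖₊ : ENNReal) ^ p ∂(μH[(n:ℝ)].restrict (Metric.sphere (0:E) 1))
      = ∫⁻ θ in Metric.sphere (0:E) 1, (‖f θ‖₊ : ENNReal) ^ p ∂μH[(n:ℝ)] := rfl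
    _ ≤ ∫⁻ θ in (Z ∪ ⋃ m, B m), (‖f θ‖₊ : ENNReal) ^ p ∂μH[(n:ℝ)] :=
        lintegral_mono_set hZB
    _ ≤ (∫⁻ θ in Z, (‖f θ‖₊ : ENNReal) ^ p ∂μH[(n:ℝ)])
        + ∫⁻ θ in ⋃ m, B m, (‖f θ‖₊ : ENNReal) ^ p ∂μH[(n:ℝ)] :=
        lintegral_union_le _ _ _
    _ ≤ 0 + ∑' m : ℕ, ∫⁻ θ in B m, (‖f θ‖₊ : ENNReal) ^ p ∂μH[(n:ℝ)] :=
        add_le_add (le_of_eq hZint) (lintegral_iUnion_le _ _)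
    _ = ∑' m : ℕ, ∫⁻ θ in B m, (‖f θ‖₊ : ENNReal) ^ p ∂μH[(n:ℝ)] := zero_add _
    _ ≤ ∑' m : ℕ, cm m * (Dc * (ENNReal.ofReal (Real.exp (-(m:ℝ)))) ^ (n-k)) :=
        ENNReal.tsum_le_tsum fun m =>
          (hBint m).trans (mul_le_mul_right (hBmeas m) _)
end

section
/- Let f ∈ S(ℝⁿ) (Schwartz space) and define f̃(θ,t) = f(tθ) for θ ∈ S^{n−1}, t ∈ ℝ. Then for every m ∈ ℤ₊ there exist N ∈ ℤ₊ and a constant c independent of f such that sup_{|α|+j ≤ m} sup_{θ,t} (1+|t|)^m |(∂_θ^α ∂_t^j f̃)(θ,t)| ≤ c · sup_{|γ| ≤ N} sup_y (1+|y|)^N |(∂^γ f)(y)|. In particular f ↦ f̃ is a continuous map from S(ℝⁿ) to the space S_e(S^{n−1}×ℝ) of smooth rapidly decreasing even functions on S^{n−1}×ℝ. -/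
open MeasureTheory

noncomputable section

/-- Directional derivative operator along `v`. -/
def dirDeriv {E F : Type*} [NormedAddCommGroup E] [NormedSpace ℝ E]
    [NormedAddCommGroup F] [NormedSpace ℝ F] (v : E) (f : E → F) : E → F :=
  fun x => fderiv ℝ f x v

/-- Iterated mixed partial derivative `∂^α` along the directions `e i`,
`i`-th one taken `α i` times. -/
def multiDeriv {E F : Type*} [NormedAddCommGroup E] [NormedSpace ℝ E]
    [NormedAddCommGroup F] [NormedSpace ℝ F] {d : ℕ} (e : Fin d → E)
    (α : Fin d → ℕ) (f : E → F) : E → F :=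
  (List.finRange d).foldr (fun i g => (dirDeriv (e i))^[α i] g) f

/-- The partial derivative `∂^α` on `ℝ^d` for a multi-index `α`. -/
def multiPderiv {d : ℕ} {F : Type*} [NormedAddCommGroup F] [NormedSpace ℝ F]
    (α : Fin d → ℕ) (f : EuclideanSpace ℝ (Fin d) → F) :
    EuclideanSpace ℝ (Fin d) → F :=
  multiDeriv (fun i => EuclideanSpace.single i (1 : ℝ)) α f

/-- The order `|α| = α₁ + … + α_d` of a multi-index. -/
def mdeg {d : ℕ} (α : Fin d → ℕ) : ℕ := ∑ i, α i

/-- The finite set of multi-indices on `Fin d` with all entries `≤ N`. -/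
def mIdx (d N : ℕ) : Finset (Fin d → ℕ) := Fintype.piFinset fun _ => Finset.range (N + 1)

end

open ContDiff Filter Set

noncomputable section AuxA

variable {E F : Type*} [NormedAddCommGroup E] [NormedSpace ℝ E]
  [NormedAddCommGroup F] [NormedSpace ℝ F]

/-- Nested directional derivatives along a list of directions. -/
def dl (l : List E) (g : E → F) : E → F := l.foldr dirDeriv g

@[simp] lemma dl_nil (g : E → F) : dl [] g = g := rfl

@[simp] lemma dl_cons (v : E) (l : List E) (g : E → F) :
    dl (v :: l) g = dirDeriv v (dl l g) := rfl

lemma dl_append (l₁ l₂ : List E) (g : E → F) : dl (l₁ ++ l₂) g = dl l₁ (dl l₂ g) := by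
  induction l₁ with
  | nil => rfl
  | cons v l ih => simp [ih]

lemma iterate_dirDeriv_eq_dl (v : E) (k : ℕ) (g : E → F) :
    (dirDeriv v)^[k] g = dl (List.replicate k v) g := by
  induction k with
  | zero => rfl
  | succ k ih => rw [Function.iterate_succ_apply', ih]; rfl

/-- list of directions attached to a multi-index -/
def mlist {d : ℕ} (e : Fin d → E) (α : Fin d → ℕ) : List E :=
  (List.finRange d).foldr (fun i l => List.replicate (α i) (e i) ++ l) []

lemma multiDeriv_eq_dl {d : ℕ} (e : Fin d → E) (α : Fin d → ℕ) (f : E → F) :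
    multiDeriv e α f = dl (mlist e α) f := by
  show (List.finRange d).foldr _ f = dl ((List.finRange d).foldr _ []) f
  induction List.finRange d with
  | nil => rfl
  | cons i L ih =>
      rw [List.foldr_cons, List.foldr_cons, ih, iterate_dirDeriv_eq_dl, ← dl_append]

lemma mlist_length {d : ℕ} (e : Fin d → E) (α : Fin d → ℕ) :
    (mlist e α).length = mdeg α := by
  rw [mdeg, Fin.sum_univ_def]
  show (List.foldr _ [] _).length = _
  induction List.finRange d with
  | nil => rfl
  | cons i L ih => simp [ih, Function.comp_def]

lemma mem_mlist {d : ℕ} {e : Fin d → E} {α : Fin d → ℕ} {x : E} (hx : x ∈ mlist e α) :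
    ∃ i, x = e i := by
  revert hx
  show x ∈ List.foldr _ [] _ → _
  induction List.finRange d with
  | nil => intro h; simp at h
  | cons i L ih =>
      intro h
      rcases List.mem_append.1 h with h | h
      · exact ⟨i, (List.eq_of_mem_replicate h)⟩
      · exact ih h

lemma map_mlist {E' : Type*} {d : ℕ} (φ : E → E') (e : Fin d → E) (α : Fin d → ℕ) :
    (mlist e α).map φ = mlist (φ ∘ e) α := by
  show (List.foldr _ [] _).map φ = List.foldr _ [] _
  induction List.finRange d with
  | nil => rfl
  | cons i L ih => simp [ih, Function.comp_def]

end AuxA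

section AuxB

variable {E F : Type*} [NormedAddCommGroup E] [NormedSpace ℝ E]
  [NormedAddCommGroup F] [NormedSpace ℝ F]

lemma nat_le_infty (i : ℕ) : (i : WithTop ℕ∞) ≤ ∞ := by
  exact_mod_cast (le_top : (i : ℕ∞) ≤ ⊤)

lemma one_le_infty : (1 : WithTop ℕ∞) ≤ ∞ := by
  exact_mod_cast (le_top : (1 : ℕ∞) ≤ ⊤)

lemma infty_add_le (i : ℕ) : ∞ + (i : WithTop ℕ∞) ≤ ∞ := by
  exact_mod_cast (le_top : ((⊤ + i : ℕ∞)) ≤ ⊤)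

lemma one_add_le_infty (i : ℕ) : (1 : WithTop ℕ∞) + (i : WithTop ℕ∞) ≤ ∞ := by
  exact_mod_cast (le_top : ((1 + i : ℕ) : ℕ∞) ≤ ⊤)

lemma fderiv_iteratedFDeriv_apply' {g : E → F} {x : E} (hg : ContDiffAt ℝ ∞ g x)
    (q : ℕ) (u : Fin q → E) (v : E) :
    fderiv ℝ (fun y => iteratedFDeriv ℝ q g y u) x v
      = iteratedFDeriv ℝ (q + 1) g x (Fin.cons v u) := by
  have hdiff : DifferentiableAt ℝ (iteratedFDeriv ℝ q g) x := by
    have h1 : ContDiffAt ℝ 1 (iteratedFDeriv ℝ q g) x :=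
      hg.iteratedFDeriv_right (one_add_le_infty q)
    exact h1.differentiableAt one_ne_zero
  have hcomp :
      HasFDerivAt (fun y => (ContinuousMultilinearMap.apply ℝ (fun _ : Fin q => E) F u)
          (iteratedFDeriv ℝ q g y))
        ((ContinuousMultilinearMap.apply ℝ (fun _ : Fin q => E) F u).comp
          (fderiv ℝ (iteratedFDeriv ℝ q g) x)) x :=
    ((ContinuousMultilinearMap.apply ℝ (fun _ : Fin q => E) F u).hasFDerivAt).comp x
      hdiff.hasFDerivAt
  have : fderiv ℝ (fun y => iteratedFDeriv ℝ q g y u) x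
      = (ContinuousMultilinearMap.apply ℝ (fun _ : Fin q => E) F u).comp
          (fderiv ℝ (iteratedFDeriv ℝ q g) x) := hcomp.fderiv
  rw [this, iteratedFDeriv_succ_apply_left, Fin.cons_zero, Fin.tail_cons]
  rfl

lemma dl_eq_iteratedFDeriv {U : Set E} (hU : IsOpen U) {g : E → F}
    (hg : ContDiffOn ℝ ∞ g U) (l : List E) :
    ∀ x ∈ U, dl l g x = iteratedFDeriv ℝ l.length g x (fun i => l.get i) := by
  induction l with
  | nil =>
      intro x hx
      simp [iteratedFDeriv_zero_apply]
  | cons v l ih =>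
      intro x hx
      have heq : dl l g =ᶠ[nhds x]
          fun y => iteratedFDeriv ℝ l.length g y (fun i => l.get i) :=
        Filter.eventuallyEq_of_mem (hU.mem_nhds hx) (fun y hy => ih y hy)
      have h1 : dl (v :: l) g x = fderiv ℝ (dl l g) x v := rfl
      rw [h1, heq.fderiv_eq,
        fderiv_iteratedFDeriv_apply' (hg.contDiffAt (hU.mem_nhds hx)) l.length _ v]
      have hget : (fun i => (v :: l).get i) = Fin.cons v (fun i => l.get i) := by
        funext i
        refine Fin.cases ?_ (fun j => ?_) i <;> rfl
      rw [hget]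
      rfl

lemma dl_contDiffOn {U : Set E} (hU : IsOpen U) {g : E → F}
    (hg : ContDiffOn ℝ ∞ g U) (l : List E) : ContDiffOn ℝ ∞ (dl l g) U := by
  intro x hx
  have h1 : ContDiffAt ℝ ∞
      (fun y => (ContinuousMultilinearMap.apply ℝ (fun _ : Fin l.length => E) F
        (fun i => l.get i)) (iteratedFDeriv ℝ l.length g y)) x :=
    (ContinuousMultilinearMap.apply ℝ (fun _ : Fin l.length => E) F
      (fun i => l.get i)).contDiff.contDiffAt.comp x
      ((hg.contDiffAt (hU.mem_nhds hx)).iteratedFDeriv_right (infty_add_le l.length))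
  have h2 : dl l g =ᶠ[nhds x]
      fun y => (ContinuousMultilinearMap.apply ℝ (fun _ : Fin l.length => E) F
        (fun i => l.get i)) (iteratedFDeriv ℝ l.length g y) :=
    Filter.eventuallyEq_of_mem (hU.mem_nhds hx)
      (fun y hy => dl_eq_iteratedFDeriv hU hg l y hy)
  exact (h1.congr_of_eventuallyEq h2).contDiffWithinAt

lemma dl_congrOn {U : Set E} (hU : IsOpen U) {h₁ h₂ : E → F} (h : Set.EqOn h₁ h₂ U)
    (l : List E) : Set.EqOn (dl l h₁) (dl l h₂) U := by
  induction l with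
  | nil => exact h
  | cons v l ih =>
      intro x hx
      show fderiv ℝ (dl l h₁) x v = fderiv ℝ (dl l h₂) x v
      rw [(Filter.eventuallyEq_of_mem (hU.mem_nhds hx) ih).fderiv_eq]

lemma dirDeriv_comm {g : E → F} (hg : ContDiff ℝ ∞ g) (v w x : E) :
    dirDeriv v (dirDeriv w g) x = dirDeriv w (dirDeriv v g) x := by
  have hsymm : IsSymmSndFDerivAt ℝ g x :=
    hg.contDiffAt.isSymmSndFDerivAt (by rw [minSmoothness_of_isRCLikeNormedField]; norm_cast)
  have key : ∀ u : E, ∀ y : E, dirDeriv u g = fun z => fderiv ℝ g z u := fun _ _ => rfl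
  have hdiff : DifferentiableAt ℝ (fderiv ℝ g) x :=
    (hg.contDiffAt.fderiv_right (by norm_cast)
      : ContDiffAt ℝ 1 (fderiv ℝ g) x).differentiableAt one_ne_zero
  have main : ∀ u u' : E, dirDeriv u (dirDeriv u' g) x = fderiv ℝ (fderiv ℝ g) x u u' := by
    intro u u'
    have hc : HasFDerivAt (fun z => (ContinuousLinearMap.apply ℝ F u') (fderiv ℝ g z))
        ((ContinuousLinearMap.apply ℝ F u').comp (fderiv ℝ (fderiv ℝ g) x)) x :=
      ((ContinuousLinearMap.apply ℝ F u').hasFDerivAt).comp x hdiff.hasFDerivAt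
    show fderiv ℝ (fun z => fderiv ℝ g z u') x u = _
    rw [(show (fun z => fderiv ℝ g z u')
        = fun z => (ContinuousLinearMap.apply ℝ F u') (fderiv ℝ g z) from rfl), hc.fderiv]
    rfl
  rw [main v w, main w v, hsymm.eq v w]

lemma dl_contDiff {g : E → F} (hg : ContDiff ℝ ∞ g) (l : List E) :
    ContDiff ℝ ∞ (dl l g) := by
  rw [← contDiffOn_univ]
  exact dl_contDiffOn isOpen_univ (contDiffOn_univ.2 hg) l

lemma dl_perm {g : E → F} (hg : ContDiff ℝ ∞ g) {l₁ l₂ : List E} (h : l₁.Perm l₂) :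
    dl l₁ g = dl l₂ g := by
  induction h with
  | nil => rfl
  | cons v _ ih => rw [dl_cons, dl_cons, ih]
  | swap v w l => funext x; exact dirDeriv_comm (dl_contDiff hg l) w v x
  | trans _ _ ih₁ ih₂ => rw [ih₁, ih₂]

lemma dl_ofFn {g : E → F} (hg : ContDiff ℝ ∞ g) :
    ∀ (q : ℕ) (u : Fin q → E) (x : E),
      dl (List.ofFn u) g x = iteratedFDeriv ℝ q g x u := by
  intro q
  induction q with
  | zero =>
      intro u x
      rw [List.ofFn_zero]
      simp [iteratedFDeriv_zero_apply]
  | succ q ih =>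
      intro u x
      rw [List.ofFn_succ]
      have h1 : dl (List.ofFn (fun i => u i.succ)) g
          = fun y => iteratedFDeriv ℝ q g y (fun i => u i.succ) :=
        funext fun y => ih _ y
      show fderiv ℝ (dl (List.ofFn fun i => u i.succ) g) x (u 0) = _
      rw [h1, fderiv_iteratedFDeriv_apply' hg.contDiffAt q _ (u 0)]
      congr 1
      exact Fin.cons_self_tail u

end AuxB

section AuxC

variable {d : ℕ}

/-- The sorted list of indices of a multi-index, over base list `L`. -/
def repList (γ : Fin d → ℕ) (L : List (Fin d)) : List (Fin d) :=
  L.foldr (fun i l => List.replicate (γ i) i ++ l) []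

lemma repList_congr {γ₁ γ₂ : Fin d → ℕ} :
    ∀ {L : List (Fin d)}, (∀ i ∈ L, γ₁ i = γ₂ i) → repList γ₁ L = repList γ₂ L := by
  intro L
  induction L with
  | nil => intro _; rfl
  | cons i L ih =>
      intro h
      show List.replicate (γ₁ i) i ++ repList γ₁ L = List.replicate (γ₂ i) i ++ repList γ₂ L
      rw [h i List.mem_cons_self, ih (fun j hj => h j (List.mem_cons_of_mem i hj))]

lemma repList_perm_insert {γ : Fin d → ℕ} {i₀ : Fin d} :
    ∀ {L : List (Fin d)}, i₀ ∈ L → L.Nodup →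
      (i₀ :: repList γ L).Perm (repList (Function.update γ i₀ (γ i₀ + 1)) L) := by
  intro L
  induction L with
  | nil => intro h; simp at h
  | cons i L ih =>
      intro hmem hnd
      rcases List.nodup_cons.1 hnd with ⟨hiL, hndL⟩
      have hrl : repList γ (i :: L) = List.replicate (γ i) i ++ repList γ L := rfl
      rcases List.mem_cons.1 hmem with h | h
      · subst h
        have h1 : repList (Function.update γ i₀ (γ i₀ + 1)) L = repList γ L := by
          refine repList_congr (fun j hj => Function.update_of_ne (fun hji => ?_) _ _)
          exact hiL (hji ▸ hj)
        show (i₀ :: (List.replicate (γ i₀) i₀ ++ repList γ L)).Perm _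
        show _root_.List.Perm _ (List.replicate (Function.update γ i₀ (γ i₀ + 1) i₀) i₀ ++
          repList (Function.update γ i₀ (γ i₀ + 1)) L)
        rw [Function.update_self, h1, List.replicate_succ]
        exact List.Perm.refl _
      · have hne : i ≠ i₀ := fun hii => hiL (hii ▸ h)
        show (i₀ :: (List.replicate (γ i) i ++ repList γ L)).Perm
          (List.replicate (Function.update γ i₀ (γ i₀ + 1) i) i ++
            repList (Function.update γ i₀ (γ i₀ + 1)) L)
        rw [Function.update_of_ne hne]
        refine List.Perm.trans (List.perm_middle.symm.trans ?_) (List.Perm.refl _)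
        exact List.Perm.append_left _ (ih h hndL)

lemma exists_sorted_perm (q : ℕ) (v : Fin q → Fin d) :
    ∃ γ : Fin d → ℕ, mdeg γ = q ∧ (List.ofFn v).Perm (repList γ (List.finRange d)) := by
  induction q with
  | zero =>
      refine ⟨fun _ => 0, by simp [mdeg], ?_⟩
      have : repList (fun _ => (0:ℕ)) (List.finRange d) = [] := by
        show List.foldr _ [] _ = []
        induction List.finRange d with
        | nil => rfl
        | cons i L ih => simp [ih]
      rw [List.ofFn_zero, this]
  | succ q ih =>
      obtain ⟨γ', hdeg, hperm⟩ := ih (fun i => v i.succ)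
      refine ⟨Function.update γ' (v 0) (γ' (v 0) + 1), ?_, ?_⟩
      · rw [mdeg, Finset.sum_update_of_mem (Finset.mem_univ _)]
        rw [mdeg] at hdeg
        rw [← Finset.sum_erase_add _ _ (Finset.mem_univ (v 0))] at hdeg
        simp only [Finset.sdiff_singleton_eq_erase] at *
        omega
      · rw [List.ofFn_succ]
        exact (hperm.cons (v 0)).trans
          (repList_perm_insert (List.mem_finRange _) (List.nodup_finRange d))

lemma mlist_eq_map_repList {E : Type*} (e : Fin d → E) (γ : Fin d → ℕ) :
    mlist e γ = (repList γ (List.finRange d)).map e := by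
  show _ = (List.foldr _ [] _).map e
  show List.foldr _ [] (List.finRange d) = _
  induction List.finRange d with
  | nil => rfl
  | cons i L ih => simp only [List.foldr_cons, List.map_append, List.map_replicate, ih]

end AuxC

section AuxD

variable {n : ℕ}

lemma abs_coord_le_norm (y : EuclideanSpace ℝ (Fin n)) (k : Fin n) : |y k| ≤ ‖y‖ := by
  have h := abs_real_inner_le_norm (EuclideanSpace.single k (1:ℝ)) y
  rw [EuclideanSpace.inner_single_left, EuclideanSpace.norm_single] at h
  simpa using h

lemma norm_iteratedFDeriv_le_of_partials {f : EuclideanSpace ℝ (Fin n) → ℝ}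
    (hf : ContDiff ℝ ∞ f) (q : ℕ) (y : EuclideanSpace ℝ (Fin n)) {B' : ℝ} (hB' : 0 ≤ B')
    (hb : ∀ γ : Fin n → ℕ, mdeg γ = q → |multiPderiv γ f y| ≤ B') :
    ‖iteratedFDeriv ℝ q f y‖ ≤ (n:ℝ) ^ q * B' := by
  set T := iteratedFDeriv ℝ q f y with hT
  have hTe : ∀ v : Fin q → Fin n, |T (fun i => EuclideanSpace.single (v i) (1:ℝ))| ≤ B' := by
    intro v
    obtain ⟨γ, hγdeg, hγperm⟩ := exists_sorted_perm q v
    have h1 : T (fun i => EuclideanSpace.single (v i) (1:ℝ))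
        = dl (List.ofFn (fun i => EuclideanSpace.single (v i) (1:ℝ))) f y :=
      (dl_ofFn hf q _ y).symm
    have h2 : List.ofFn (fun i => EuclideanSpace.single (v i) (1:ℝ))
        = (List.ofFn v).map (fun k => EuclideanSpace.single k (1:ℝ)) := by
      rw [List.map_ofFn]; rfl
    have h3 : dl ((List.ofFn v).map (fun k => EuclideanSpace.single k (1:ℝ))) f
        = dl (mlist (fun k => EuclideanSpace.single k (1:ℝ)) γ) f := by
      apply dl_perm hf
      rw [mlist_eq_map_repList]
      exact hγperm.map _
    have h4 : dl (mlist (fun k => EuclideanSpace.single k (1:ℝ)) γ) f y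
        = multiPderiv γ f y := by
      rw [multiPderiv, multiDeriv_eq_dl]
    rw [h1, h2, h3, h4]
    exact hb γ hγdeg
  refine (ContinuousMultilinearMap.opNorm_le_iff (by positivity)).2 ?_
  intro mm
  have hmm : ∀ i, mm i = ∑ k, mm i k • EuclideanSpace.single k (1:ℝ) := by
    intro i
    have h := (EuclideanSpace.basisFun (Fin n) ℝ).sum_repr (mm i)
    simp only [EuclideanSpace.basisFun_repr, EuclideanSpace.basisFun_apply] at h
    exact h.symm
  have hexp : T mm = ∑ v : Fin q → Fin n,
      (∏ i, mm i (v i)) • T (fun i => EuclideanSpace.single (v i) (1:ℝ)) := by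
    conv_lhs => rw [show mm = fun i => ∑ k, mm i k • EuclideanSpace.single k (1:ℝ) from
      funext hmm]
    rw [show T (fun i => ∑ k, mm i k • EuclideanSpace.single k (1:ℝ))
        = T.toMultilinearMap (fun i => ∑ k, mm i k • EuclideanSpace.single k (1:ℝ)) from rfl,
      MultilinearMap.map_sum]
    exact Finset.sum_congr rfl fun v _ => by
      rw [MultilinearMap.map_smul_univ]; rfl
  calc ‖T mm‖ ≤ ∑ v : Fin q → Fin n,
        ‖(∏ i, mm i (v i)) • T (fun i => EuclideanSpace.single (v i) (1:ℝ))‖ := by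
        rw [hexp]; exact norm_sum_le _ _
    _ ≤ ∑ _v : Fin q → Fin n, (∏ i, ‖mm i‖) * B' := by
        refine Finset.sum_le_sum fun v _ => ?_
        rw [norm_smul, Real.norm_eq_abs, Real.norm_eq_abs, Finset.abs_prod]
        refine mul_le_mul ?_ (hTe v) (abs_nonneg _) (Finset.prod_nonneg fun i _ => norm_nonneg _)
        exact Finset.prod_le_prod (fun i _ => abs_nonneg _)
          (fun i _ => abs_coord_le_norm (mm i) (v i))
    _ = (n:ℝ) ^ q * B' * ∏ i, ‖mm i‖ := by
        rw [Finset.sum_const, Finset.card_univ]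
        have : Fintype.card (Fin q → Fin n) = n ^ q := by
          rw [Fintype.card_fun]; simp
        rw [this]
        push_cast
        ring
  
end AuxD

section AuxE

variable {E F : Type*} [NormedAddCommGroup E] [NormedSpace ℝ E]
  [NormedAddCommGroup F] [NormedSpace ℝ F]

lemma slice_x {W : Set (E × ℝ)} (hW : IsOpen W) {H : E × ℝ → F}
    (hH : ContDiffOn ℝ ∞ H W) (t : ℝ) (l : List E) :
    ∀ x : E, (x, t) ∈ W →
      dl l (fun x' => H (x', t)) x = dl (l.map (fun v => (v, (0:ℝ)))) H (x, t) := by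
  induction l with
  | nil => intro x _; rfl
  | cons v l ih =>
      intro x hx
      have hS : IsOpen {x' : E | (x', t) ∈ W} :=
        hW.preimage (continuous_id.prodMk continuous_const)
      have heq : dl l (fun x' => H (x', t)) =ᶠ[nhds x]
          fun x' => dl (l.map (fun v => (v, (0:ℝ)))) H (x', t) :=
        Filter.eventuallyEq_of_mem (hS.mem_nhds hx) (fun y hy => ih y hy)
      have hdiff : DifferentiableAt ℝ (dl (l.map (fun v => (v, (0:ℝ)))) H) (x, t) :=
        ((dl_contDiffOn hW hH _).contDiffAt (hW.mem_nhds hx)).differentiableAt (by simp)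
      have hι : HasFDerivAt (fun x' : E => (x', t)) (ContinuousLinearMap.inl ℝ E ℝ) x :=
        hasFDerivAt_prodMk_left x t
      have h2 : fderiv ℝ (fun x' : E => dl (l.map (fun v => (v, (0:ℝ)))) H (x', t)) x
          = (fderiv ℝ (dl (l.map (fun v => (v, (0:ℝ)))) H) (x, t)).comp
              (ContinuousLinearMap.inl ℝ E ℝ) :=
        (hdiff.hasFDerivAt.comp x hι).fderiv
      show fderiv ℝ (dl l fun x' => H (x', t)) x v = _
      rw [heq.fderiv_eq, h2]
      rfl

lemma iterate_deriv_congrOn {S : Set ℝ} (hS : IsOpen S) {h₁ h₂ : ℝ → F}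
    (h : Set.EqOn h₁ h₂ S) (j : ℕ) : Set.EqOn (deriv^[j] h₁) (deriv^[j] h₂) S := by
  induction j generalizing h₁ h₂ with
  | zero => exact h
  | succ j ih =>
      intro s hs
      rw [Function.iterate_succ_apply, Function.iterate_succ_apply]
      exact ih (fun s' hs' => (Filter.eventuallyEq_of_mem (hS.mem_nhds hs') h).deriv_eq) hs

lemma slice_t {W : Set (E × ℝ)} (hW : IsOpen W) :
    ∀ (j : ℕ) {H : E × ℝ → F}, ContDiffOn ℝ ∞ H W → ∀ (x : E) (t : ℝ), (x, t) ∈ W →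
      deriv^[j] (fun s => H (x, s)) t
        = dl (List.replicate j ((0:E), (1:ℝ))) H (x, t) := by
  intro j
  induction j with
  | zero => intro H _ x t _; rfl
  | succ j ih =>
      intro H hH x t hxt
      have hS : IsOpen {s : ℝ | (x, s) ∈ W} :=
        hW.preimage (continuous_const.prodMk continuous_id)
      have hderiv : Set.EqOn (deriv (fun s => H (x, s)))
          (fun s => dirDeriv ((0:E),(1:ℝ)) H (x, s)) {s : ℝ | (x, s) ∈ W} := by
        intro s hs
        have h1 : HasDerivAt (fun s' : ℝ => (x, s')) ((0:E), (1:ℝ)) s :=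
          (hasDerivAt_const s x).prodMk (hasDerivAt_id s)
        have h2 : DifferentiableAt ℝ H (x, s) :=
          (hH.contDiffAt (hW.mem_nhds hs)).differentiableAt (by simp)
        exact (h2.hasFDerivAt.comp_hasDerivAt s h1).deriv
      rw [Function.iterate_succ_apply]
      rw [iterate_deriv_congrOn hS hderiv j hxt]
      have hH' : ContDiffOn ℝ ∞ (dirDeriv ((0:E),(1:ℝ)) H) W :=
        dl_contDiffOn hW hH [((0:E),(1:ℝ))]
      rw [ih hH' x t hxt, List.replicate_succ', dl_append]
      rfl

lemma clm_iteratedFDeriv_succ_succ (L : E →L[ℝ] F) (k : ℕ) (x : E) :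
    iteratedFDeriv ℝ (k + 2) (⇑L) x = 0 := by
  ext m
  rw [iteratedFDeriv_succ_apply_right]
  rw [show (fun y : E => fderiv ℝ (⇑L) y) = fun _ : E => L from funext fun y => L.fderiv,
    iteratedFDeriv_const_of_ne (Nat.succ_ne_zero k)]
  simp

lemma clm_norm_iteratedFDeriv_one (L : E →L[ℝ] F) (x : E) :
    ‖iteratedFDeriv ℝ 1 (⇑L) x‖ ≤ ‖L‖ := by
  refine (ContinuousMultilinearMap.opNorm_le_iff (norm_nonneg L)).2 fun m => ?_
  rw [iteratedFDeriv_succ_apply_right]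
  rw [show (fun y : E => fderiv ℝ (⇑L) y) = fun _ : E => L from funext fun y => L.fderiv]
  rw [iteratedFDeriv_zero_apply]
  calc ‖L (m (Fin.last 0))‖ ≤ ‖L‖ * ‖m (Fin.last 0)‖ := L.le_opNorm _
    _ = ‖L‖ * ∏ i, ‖m i‖ := by
        rw [Fin.prod_univ_one]
        rfl

lemma clm_iFDW_le {U : Set E} (hU : IsOpen U) {x : E} (hx : x ∈ U) (L : E →L[ℝ] F)
    {K : ℝ} (h0 : ‖L x‖ ≤ K) (h1 : ‖L‖ ≤ K) :
    ∀ i : ℕ, ‖iteratedFDerivWithin ℝ i (⇑L) U x‖ ≤ K := by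
  have hK : 0 ≤ K := (norm_nonneg _).trans h0
  intro i
  rw [iteratedFDerivWithin_of_isOpen i hU hx]
  match i with
  | 0 => rw [norm_iteratedFDeriv_zero]; exact h0
  | 1 => exact (clm_norm_iteratedFDeriv_one L x).trans h1
  | (k+2) => rw [clm_iteratedFDeriv_succ_succ]; simpa using hK

end AuxE

/-- Continuity of `f ↦ f̃`, `f̃(θ,t) = f(tθ)`, from `S(ℝⁿ)` to `S_e(S^{n-1}×ℝ)`:
for every `m` there are `N` and `c > 0`, independent of `f`, with
`sup_{|α|+j≤m} sup_{θ∈S^{n-1},t} (1+|t|)^m |∂_θ^α ∂_t^j f̃(θ,t)|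
  ≤ c sup_{|γ|≤N} sup_y (1+|y|)^N |∂^γ f(y)|`,
where `∂_θ^α` acts through the homogeneous extension `x ↦ f(t x/|x|)`. -/
theorem stmt12 (n : ℕ) (hn : 1 ≤ n) (m : ℕ) :
    ∃ (N : ℕ) (c : ℝ), 0 < c ∧
      ∀ f : SchwartzMap (EuclideanSpace ℝ (Fin n)) ℝ, ∀ B : ℝ,
        (∀ γ : Fin n → ℕ, mdeg γ ≤ N → ∀ y : EuclideanSpace ℝ (Fin n),
          (1 + ‖y‖) ^ N * |multiPderiv γ (⇑f) y| ≤ B) →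
        ∀ (α : Fin n → ℕ) (j : ℕ), mdeg α + j ≤ m →
          ∀ θ : EuclideanSpace ℝ (Fin n), ‖θ‖ = 1 → ∀ t : ℝ,
            (1 + |t|) ^ m *
              |multiPderiv α
                (fun x => iteratedDeriv j (fun s => f ((s / ‖x‖) • x)) t) θ| ≤
              c * B := by
  classical
  set V : Set (EuclideanSpace ℝ (Fin n)) := {x | x ≠ 0} with hVdef
  have hV : IsOpen V := isOpen_ne
  set w : EuclideanSpace ℝ (Fin n) → ℝ := fun x => ‖x‖⁻¹ with hwdef
  have hw : ContDiffOn ℝ ∞ w V := by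
    intro x hx
    exact (((contDiffAt_id (x := x)).norm ℝ hx).inv (norm_ne_zero_iff.2 hx)).contDiffWithinAt
  have hsub : Metric.sphere (0:EuclideanSpace ℝ (Fin n)) 1 ⊆ V := by
    intro x hx
    have h1 : ‖x‖ = 1 := mem_sphere_zero_iff_norm.1 hx
    intro h0
    rw [h0] at h1; simp at h1
  obtain ⟨C0, hC0⟩ := (isCompact_sphere (0:EuclideanSpace ℝ (Fin n)) 1).exists_bound_of_continuousOn
    (f := fun x => ∑ b ∈ Finset.range (m+1), ‖iteratedFDerivWithin ℝ b w V x‖)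
    (continuousOn_finset_sum _ fun b _ =>
      ((hw.continuousOn_iteratedFDerivWithin (nat_le_infty b) hV.uniqueDiffOn).mono hsub).norm)
  set Cw := max C0 1 with hCwdef
  have hCw1 : (1:ℝ) ≤ Cw := le_max_right _ _
  have hCw0 : (0:ℝ) ≤ Cw := zero_le_one.trans hCw1
  have hwbound : ∀ x ∈ Metric.sphere (0:EuclideanSpace ℝ (Fin n)) 1, ∀ b ≤ m,
      ‖iteratedFDerivWithin ℝ b w V x‖ ≤ Cw := by
    intro x hx b hb
    have h1 : ‖iteratedFDerivWithin ℝ b w V x‖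
        ≤ ∑ b' ∈ Finset.range (m+1), ‖iteratedFDerivWithin ℝ b' w V x‖ :=
      Finset.single_le_sum (f := fun b' => ‖iteratedFDerivWithin ℝ b' w V x‖)
        (fun c _ => norm_nonneg _) (Finset.mem_range.2 (Nat.lt_succ_of_le hb))
    refine h1.trans ?_
    refine (le_abs_self _).trans ?_
    exact ((hC0 x hx).trans (le_max_left _ _))
  set A : ℝ := 2^m * (2^m * Cw) with hAdef
  have hA1 : (1:ℝ) ≤ A := by
    rw [hAdef]
    have h2 : (1:ℝ) ≤ 2^m := one_le_pow₀ one_le_two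
    have h3 : (1:ℝ)*1 ≤ 2^m * Cw := mul_le_mul h2 hCw1 zero_le_one (by positivity)
    have h4 : (1:ℝ)*1 ≤ 2^m * (2^m*Cw) := mul_le_mul h2 (by linarith) zero_le_one (by positivity)
    linarith
  refine ⟨2 * m, (m.factorial : ℝ) * (n:ℝ)^m * A^m, by positivity, ?_⟩
  intro f B hB α j hm θ hθ t
  have hfS : ContDiff ℝ ∞ ⇑f := f.smooth ⊤
  have hB0 : 0 ≤ B := le_trans (by positivity) (hB (fun _ => 0) (by simp [mdeg]) 0)
  have hθ0 : θ ≠ 0 := by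
    intro h0; rw [h0] at hθ; simp at hθ
  set Lfst := ContinuousLinearMap.fst ℝ (EuclideanSpace ℝ (Fin n)) ℝ with hLfst
  set W : Set (EuclideanSpace ℝ (Fin n) × ℝ) := ⇑Lfst ⁻¹' V with hWdef
  have hWopen : IsOpen W := hV.preimage Lfst.continuous
  have hmemW : ((θ, t) : EuclideanSpace ℝ (Fin n) × ℝ) ∈ W := hθ0
  set Φ : EuclideanSpace ℝ (Fin n) × ℝ → EuclideanSpace ℝ (Fin n) := fun p => (p.2 / ‖p.1‖) • p.1 with hΦdef
  have hΦ : ContDiffOn ℝ ∞ Φ W := by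
    intro p hp
    have hp1 : p.1 ≠ 0 := hp
    have h1 : ContDiffAt ℝ ∞ (fun q : EuclideanSpace ℝ (Fin n) × ℝ => ‖q.1‖) p := contDiffAt_fst.norm ℝ hp1
    have h2 : ContDiffAt ℝ ∞ (fun q : EuclideanSpace ℝ (Fin n) × ℝ => q.2 / ‖q.1‖) p :=
      contDiffAt_snd.div h1 (norm_ne_zero_iff.2 hp1)
    exact (h2.smul contDiffAt_fst).contDiffWithinAt
  have hF : ContDiffOn ℝ ∞ (⇑f ∘ Φ) W := hfS.comp_contDiffOn hΦ
  set e : Fin n → EuclideanSpace ℝ (Fin n) := fun i => EuclideanSpace.single i (1:ℝ) with hedef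
  set g₀ : EuclideanSpace ℝ (Fin n) → ℝ := fun x => iteratedDeriv j (fun s => f ((s / ‖x‖) • x)) t with hg₀def
  have hθV : θ ∈ V := hθ0
  have hstep2 : Set.EqOn g₀ (fun x => dl (List.replicate j ((0:EuclideanSpace ℝ (Fin n)),(1:ℝ))) (⇑f ∘ Φ) (x, t)) V := by
    intro x hx
    show iteratedDeriv j (fun s => f ((s / ‖x‖) • x)) t = _
    rw [iteratedDeriv_eq_iterate]
    exact slice_t hWopen j hF x t hx
  set bigl : List (EuclideanSpace ℝ (Fin n) × ℝ) :=
    (mlist e α).map (fun v => (v,(0:ℝ))) ++ List.replicate j ((0:EuclideanSpace ℝ (Fin n)),(1:ℝ)) with hbigl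
  have hrw : multiPderiv α g₀ θ = dl bigl (⇑f ∘ Φ) (θ, t) := by
    rw [multiPderiv, multiDeriv_eq_dl]
    rw [dl_congrOn hV hstep2 (mlist e α) hθV]
    rw [slice_x hWopen (dl_contDiffOn hWopen hF _) t (mlist e α) θ hθV]
    rw [hbigl, dl_append]
  have hlen : bigl.length = mdeg α + j := by
    rw [hbigl]
    simp [mlist_length]
  have hunit : ∀ p ∈ bigl, ‖p‖ ≤ 1 := by
    intro p hp
    rcases List.mem_append.1 hp with hp | hp
    · rcases List.mem_map.1 hp with ⟨v, hv, rfl⟩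
      rcases mem_mlist hv with ⟨i, rfl⟩
      rw [Prod.norm_def]
      simp [hedef, EuclideanSpace.norm_single]
    · rw [List.eq_of_mem_replicate hp, Prod.norm_def]
      simp
  have hnorm1 : |multiPderiv α g₀ θ|
      ≤ ‖iteratedFDeriv ℝ (mdeg α + j) (⇑f ∘ Φ) (θ,t)‖ := by
    rw [hrw, ← Real.norm_eq_abs, dl_eq_iteratedFDeriv hWopen hF bigl (θ,t) hmemW]
    have hb := ContinuousMultilinearMap.le_opNorm
      (iteratedFDeriv ℝ bigl.length (⇑f ∘ Φ) (θ,t)) (fun i => bigl.get i)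
    have hprod : (∏ i, ‖bigl.get i‖) ≤ 1 :=
      Finset.prod_le_one (fun i _ => norm_nonneg _) (fun i _ => hunit _ (List.get_mem bigl i))
    have h2 : ‖iteratedFDeriv ℝ bigl.length (⇑f ∘ Φ) (θ,t)‖
        = ‖iteratedFDeriv ℝ (mdeg α + j) (⇑f ∘ Φ) (θ,t)‖ := by rw [hlen]
    calc ‖(iteratedFDeriv ℝ bigl.length (⇑f ∘ Φ) (θ,t)) (fun i => bigl.get i)‖
        ≤ ‖iteratedFDeriv ℝ bigl.length (⇑f ∘ Φ) (θ,t)‖ * ∏ i, ‖bigl.get i‖ := hb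
      _ ≤ ‖iteratedFDeriv ℝ bigl.length (⇑f ∘ Φ) (θ,t)‖ * 1 := by
          gcongr
      _ = ‖iteratedFDeriv ℝ (mdeg α + j) (⇑f ∘ Φ) (θ,t)‖ := by rw [mul_one, h2]
  -- bounds for the composition
  have hM'm : mdeg α + j ≤ m := hm
  have hu1 : (1:ℝ) ≤ 1 + |t| := by linarith [abs_nonneg t]
  have hu0 : (0:ℝ) < 1 + |t| := by linarith
  -- bound on derivatives of f at t • θ
  have hC : ∀ i ≤ mdeg α + j,
      ‖iteratedFDerivWithin ℝ i (⇑f) Set.univ (Φ (θ, t))‖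
        ≤ (n:ℝ)^m * (B / (1+|t|)^(2*m)) := by
    intro i hi
    rw [iteratedFDerivWithin_univ]
    have hΦθ : Φ (θ, t) = t • θ := by
      rw [hΦdef]
      show (t / ‖θ‖) • θ = t • θ
      rw [hθ, div_one]
    rw [hΦθ]
    have hBp : 0 ≤ B / (1+|t|)^(2*m) := div_nonneg hB0 (by positivity)
    have hpart : ∀ γ : Fin n → ℕ, mdeg γ = i → |multiPderiv γ (⇑f) (t • θ)| ≤ B / (1+|t|)^(2*m) := by
      intro γ hγ
      have h1 := hB γ (by omega) (t • θ)
      have hnrm : ‖t • θ‖ = |t| := by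
        rw [norm_smul, hθ, Real.norm_eq_abs, mul_one]
      rw [hnrm] at h1
      rw [le_div_iff₀ (by positivity)]
      calc |multiPderiv γ (⇑f) (t • θ)| * (1+|t|)^(2*m)
          = (1+|t|)^(2*m) * |multiPderiv γ (⇑f) (t • θ)| := by ring
        _ ≤ B := h1
    refine (norm_iteratedFDeriv_le_of_partials hfS i (t • θ) hBp hpart).trans ?_
    have hni : (n:ℝ)^i ≤ (n:ℝ)^m := by
      refine pow_le_pow_right₀ (by exact_mod_cast hn) (by omega)
    exact mul_le_mul_of_nonneg_right hni hBp
  -- bounds on derivatives of Φ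
  have hfst : ∀ a : ℕ,
      ‖iteratedFDerivWithin ℝ a (fun p : EuclideanSpace ℝ (Fin n) × ℝ => p.1) W (θ,t)‖ ≤ 1 := by
    have hLnorm : ‖Lfst‖ ≤ 1 :=
      ContinuousLinearMap.opNorm_le_bound _ zero_le_one fun p => by
        rw [one_mul, hLfst]; exact norm_fst_le p
    intro a
    refine clm_iFDW_le hWopen hmemW Lfst ?_ hLnorm a
    show ‖θ‖ ≤ 1
    rw [hθ]
  have hsnd : ∀ a : ℕ,
      ‖iteratedFDerivWithin ℝ a (fun p : EuclideanSpace ℝ (Fin n) × ℝ => p.2) W (θ,t)‖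
        ≤ 1 + |t| := by
    intro a
    refine clm_iFDW_le hWopen hmemW (ContinuousLinearMap.snd ℝ (EuclideanSpace ℝ (Fin n)) ℝ)
      ?_ ?_ a
    · show ‖t‖ ≤ 1 + |t|
      rw [Real.norm_eq_abs]; linarith
    · refine le_trans (ContinuousLinearMap.opNorm_le_bound _ zero_le_one fun p => ?_) hu1
      rw [one_mul]; exact norm_snd_le p
  have hwf : ∀ b ≤ m,
      ‖iteratedFDerivWithin ℝ b (fun p : EuclideanSpace ℝ (Fin n) × ℝ => ‖p.1‖⁻¹) W (θ,t)‖
        ≤ Cw := by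
    intro b hb
    have hcompr := Lfst.iteratedFDerivWithin_comp_right (f := w) hw hV.uniqueDiffOn
      hWopen.uniqueDiffOn (x := (θ, t)) hθV (nat_le_infty b)
    rw [show (fun p : EuclideanSpace ℝ (Fin n) × ℝ => ‖p.1‖⁻¹) = w ∘ ⇑Lfst from rfl, hcompr]
    refine (ContinuousMultilinearMap.norm_compContinuousLinearMap_le _ _).trans ?_
    have h1 : ‖iteratedFDerivWithin ℝ b w V (Lfst (θ, t))‖ ≤ Cw :=
      hwbound θ (mem_sphere_zero_iff_norm.2 hθ) b hb
    have hLnorm : ‖Lfst‖ ≤ 1 :=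
      ContinuousLinearMap.opNorm_le_bound _ zero_le_one fun p => by
        rw [one_mul, hLfst]; exact norm_fst_le p
    calc ‖iteratedFDerivWithin ℝ b w V (Lfst (θ, t))‖ * ∏ _i : Fin b, ‖Lfst‖
        ≤ Cw * 1 := by
          refine mul_le_mul h1 ?_ (Finset.prod_nonneg fun _ _ => norm_nonneg _) hCw0
          exact Finset.prod_le_one (fun _ _ => norm_nonneg _) (fun _ _ => hLnorm)
      _ = Cw := mul_one Cw
  have hcnum : ∀ l ≤ m,
      ‖iteratedFDerivWithin ℝ l (fun p : EuclideanSpace ℝ (Fin n) × ℝ => p.2 / ‖p.1‖) W (θ,t)‖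
        ≤ 2^m * Cw * (1+|t|) := by
    intro l hl
    have hrwc : (fun p : EuclideanSpace ℝ (Fin n) × ℝ => p.2 / ‖p.1‖)
        = fun p : EuclideanSpace ℝ (Fin n) × ℝ =>
            (fun q : EuclideanSpace ℝ (Fin n) × ℝ => q.2) p •
            (fun q : EuclideanSpace ℝ (Fin n) × ℝ => ‖q.1‖⁻¹) p := by
      funext p
      simp [div_eq_mul_inv]
    rw [hrwc]
    have hsndS : ContDiffOn ℝ ∞ (fun q : EuclideanSpace ℝ (Fin n) × ℝ => q.2) W :=
      contDiff_snd.contDiffOn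
    have hwfS : ContDiffOn ℝ ∞ (fun q : EuclideanSpace ℝ (Fin n) × ℝ => ‖q.1‖⁻¹) W := by
      intro p hp
      exact (((contDiffAt_fst.norm ℝ hp).inv (norm_ne_zero_iff.2 hp)).contDiffWithinAt)
    refine (norm_iteratedFDerivWithin_smul_le hsndS hwfS hWopen.uniqueDiffOn hmemW
      (nat_le_infty l)).trans ?_
    have hterm : ∀ a ∈ Finset.range (l+1),
        (l.choose a : ℝ) *
          ‖iteratedFDerivWithin ℝ a (fun q : EuclideanSpace ℝ (Fin n) × ℝ => q.2) W (θ,t)‖ *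
          ‖iteratedFDerivWithin ℝ (l-a) (fun q : EuclideanSpace ℝ (Fin n) × ℝ => ‖q.1‖⁻¹) W (θ,t)‖
        ≤ (l.choose a : ℝ) * ((1+|t|) * Cw) := by
      intro a _
      have h1 := hsnd a
      have h2 := hwf (l-a) (le_trans (Nat.sub_le l a) hl)
      calc (l.choose a : ℝ) * ‖_‖ * ‖_‖ ≤ (l.choose a : ℝ) * (1+|t|) * Cw := by
            refine mul_le_mul (mul_le_mul le_rfl h1 (norm_nonneg _) (by positivity)) h2
              (norm_nonneg _) (by positivity)
        _ = (l.choose a : ℝ) * ((1+|t|) * Cw) := by ring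
    refine (Finset.sum_le_sum hterm).trans ?_
    rw [← Finset.sum_mul]
    have hchoose : ∑ a ∈ Finset.range (l+1), (l.choose a : ℝ) = 2^l := by
      rw [← Nat.cast_sum]
      rw [Nat.sum_range_choose]
      push_cast
      ring
    rw [hchoose]
    have h2l : (2:ℝ)^l ≤ 2^m := pow_le_pow_right₀ one_le_two hl
    calc (2:ℝ)^l * ((1+|t|) * Cw) ≤ 2^m * ((1+|t|) * Cw) := by
          refine mul_le_mul_of_nonneg_right h2l (by positivity)
      _ = 2^m * Cw * (1+|t|) := by ring
  have hD : ∀ i, 1 ≤ i → i ≤ mdeg α + j →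
      ‖iteratedFDerivWithin ℝ i Φ W (θ,t)‖ ≤ (A * (1+|t|)) ^ i := by
    intro i hi1 hiM
    have hcdiff : ContDiffOn ℝ ∞ (fun q : EuclideanSpace ℝ (Fin n) × ℝ => q.2 / ‖q.1‖) W := by
      intro p hp
      have hp1 : p.1 ≠ 0 := hp
      exact (contDiffAt_snd.div (contDiffAt_fst.norm ℝ hp1)
        (norm_ne_zero_iff.2 hp1)).contDiffWithinAt
    have hfstdiff : ContDiffOn ℝ ∞ (fun q : EuclideanSpace ℝ (Fin n) × ℝ => q.1) W :=
      contDiff_fst.contDiffOn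
    have hΦsmul : Φ = fun p : EuclideanSpace ℝ (Fin n) × ℝ =>
        (fun q : EuclideanSpace ℝ (Fin n) × ℝ => q.2 / ‖q.1‖) p •
        (fun q : EuclideanSpace ℝ (Fin n) × ℝ => q.1) p := rfl
    rw [hΦsmul]
    refine (norm_iteratedFDerivWithin_smul_le hcdiff hfstdiff hWopen.uniqueDiffOn hmemW
      (nat_le_infty i)).trans ?_
    have hterm : ∀ l ∈ Finset.range (i+1),
        (i.choose l : ℝ) *
          ‖iteratedFDerivWithin ℝ l (fun q : EuclideanSpace ℝ (Fin n) × ℝ => q.2 / ‖q.1‖) W (θ,t)‖ *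
          ‖iteratedFDerivWithin ℝ (i-l) (fun q : EuclideanSpace ℝ (Fin n) × ℝ => q.1) W (θ,t)‖
        ≤ (i.choose l : ℝ) * (2^m * Cw * (1+|t|)) := by
      intro l hlmem
      have hlm : l ≤ m := by
        have := Finset.mem_range.1 hlmem
        omega
      have h1 := hcnum l hlm
      have h2 := hfst (i-l)
      calc (i.choose l : ℝ) * ‖_‖ * ‖_‖ ≤ (i.choose l : ℝ) * (2^m * Cw * (1+|t|)) * 1 := by
            refine mul_le_mul (mul_le_mul le_rfl h1 (norm_nonneg _) (by positivity)) h2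
              (norm_nonneg _) (by positivity)
        _ = (i.choose l : ℝ) * (2^m * Cw * (1+|t|)) := mul_one _
    refine (Finset.sum_le_sum hterm).trans ?_
    rw [← Finset.sum_mul]
    have hchoose : ∑ l ∈ Finset.range (i+1), (i.choose l : ℝ) = 2^i := by
      rw [← Nat.cast_sum, Nat.sum_range_choose]
      push_cast
      ring
    rw [hchoose]
    have h2i : (2:ℝ)^i ≤ 2^m := pow_le_pow_right₀ one_le_two (by omega)
    have hstep : (2:ℝ)^i * (2^m * Cw * (1+|t|)) ≤ A * (1+|t|) := by
      rw [hAdef]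
      have : (2:ℝ)^i * (2^m * Cw * (1+|t|)) = (2^i * (2^m * Cw)) * (1+|t|) := by ring
      rw [this]
      refine mul_le_mul_of_nonneg_right ?_ (by positivity)
      exact mul_le_mul_of_nonneg_right h2i (by positivity)
    refine hstep.trans ?_
    refine le_self_pow₀ ?_ (by omega)
    have : (1:ℝ) ≤ A * 1 := by rw [mul_one]; exact hA1
    calc (1:ℝ) ≤ A * 1 := this
      _ ≤ A * (1+|t|) := by
          refine mul_le_mul_of_nonneg_left hu1 (by linarith)
  -- the composition bound
  have hcomp := norm_iteratedFDerivWithin_comp_le (𝕜 := ℝ) (g := ⇑f) (f := Φ)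
    (n := mdeg α + j) (s := W) (t := (Set.univ : Set (EuclideanSpace ℝ (Fin n))))
    hfS.contDiffOn hΦ (nat_le_infty (mdeg α + j)) uniqueDiffOn_univ hWopen.uniqueDiffOn
    (Set.mapsTo_univ _ _) hmemW hC hD
  have hwithin : iteratedFDerivWithin ℝ (mdeg α + j) (⇑f ∘ Φ) W (θ, t)
      = iteratedFDeriv ℝ (mdeg α + j) (⇑f ∘ Φ) (θ, t) :=
    iteratedFDerivWithin_of_isOpen _ hWopen hmemW
  rw [hwithin] at hcomp
  -- final algebra
  have hfinal : (1 + |t|) ^ m *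
      (((mdeg α + j).factorial : ℝ) * ((n:ℝ)^m * (B / (1+|t|)^(2*m))) * (A * (1+|t|)) ^ (mdeg α + j))
      ≤ (m.factorial : ℝ) * (n:ℝ)^m * A^m * B := by
    have hne : ((1:ℝ)+|t|)^(2*m) ≠ 0 := by positivity
    have hqu : (1 + |t|) ^ m * (1 + |t|) ^ (mdeg α + j) / (1+|t|)^(2*m) ≤ 1 := by
      rw [← pow_add]
      refine div_le_one_of_le₀ ?_ (by positivity)
      exact pow_le_pow_right₀ hu1 (by omega)
    have hid : (1 + |t|) ^ m *
        (((mdeg α + j).factorial : ℝ) * ((n:ℝ)^m * (B / (1+|t|)^(2*m))) * (A * (1+|t|)) ^ (mdeg α + j))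
        = (((mdeg α + j).factorial : ℝ) * (n:ℝ)^m * A^(mdeg α + j) * B) *
          ((1 + |t|) ^ m * (1 + |t|) ^ (mdeg α + j) / (1+|t|)^(2*m)) := by
      rw [mul_pow]
      field_simp
    rw [hid]
    have h1 : (((mdeg α + j).factorial : ℝ) * (n:ℝ)^m * A^(mdeg α + j) * B) *
        ((1 + |t|) ^ m * (1 + |t|) ^ (mdeg α + j) / (1+|t|)^(2*m))
        ≤ (((mdeg α + j).factorial : ℝ) * (n:ℝ)^m * A^(mdeg α + j) * B) * 1 := by
      refine mul_le_mul_of_nonneg_left hqu ?_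
      have hA0 : (0:ℝ) ≤ A := zero_le_one.trans hA1
      positivity
    refine h1.trans ?_
    rw [mul_one]
    have hfact : (((mdeg α + j).factorial : ℝ)) ≤ (m.factorial : ℝ) := by
      exact_mod_cast Nat.factorial_le hM'm
    have hpowA : A^(mdeg α + j) ≤ A^m := pow_le_pow_right₀ hA1 hM'm
    refine mul_le_mul ?_ le_rfl hB0 ?_
    · refine mul_le_mul (mul_le_mul hfact le_rfl (by positivity) (by positivity))
        hpowA (by positivity) (by positivity)
    · positivity
  have hstep1 : (1 + |t|) ^ m * |multiPderiv α g₀ θ|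
      ≤ (1 + |t|) ^ m * ‖iteratedFDeriv ℝ (mdeg α + j) (⇑f ∘ Φ) (θ,t)‖ :=
    mul_le_mul_of_nonneg_left hnorm1 (by positivity)
  have hstep2' : (1 + |t|) ^ m * ‖iteratedFDeriv ℝ (mdeg α + j) (⇑f ∘ Φ) (θ,t)‖
      ≤ (1 + |t|) ^ m *
        (((mdeg α + j).factorial : ℝ) * ((n:ℝ)^m * (B / (1+|t|)^(2*m))) *
          (A * (1+|t|)) ^ (mdeg α + j)) :=
    mul_le_mul_of_nonneg_left hcomp (by positivity)
  exact hstep1.trans (hstep2'.trans hfinal)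
end
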